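/- arXiv:1208.5522 — 3 statements merged into one kernel-verified Lean document; each statement's English description precedes it below -/
import Mathlib

section
/- For any metric spaces X and Y (their product carrying the maximum metric): (i) updim(X × Y) ≥ updim X + dpdim Y; (ii) dpdim(X × Y) ≥ dpdim X + dpdim Y; (iii) lpdim(X × Y) ≥ lpdim X + lpdim Y. -/
open Filter MeasureTheory Set
open scoped ENNReal NNReal Topology

namespace ZPaper

variable {X : Type*} [MetricSpace X] {Y : Type*} [MetricSpace Y]

/-- The `δ`-capacity of a set `E`: the supremum of cardinalities of subsets of `E`
whose points are mutually more than `δ` apart. -/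
noncomputable def capacity (δ : ℝ) (E : Set X) : ℝ≥0∞ :=
  ⨆ (F : Finset X) (_ : ↑F ⊆ E ∧ ∀ x ∈ F, ∀ y ∈ F, x ≠ y → δ < dist x y),
    (F.card : ℝ≥0∞)

/-- Lower box (Minkowski) dimension: `liminf_{δ→0} log C_δ(E) / |log δ|`. -/
noncomputable def lbdim (E : Set X) : EReal :=
  Filter.liminf (fun δ : ℝ => (capacity δ E).log / ((|Real.log δ| : ℝ) : EReal)) (𝓝[>] (0:ℝ))

/-- Upper box (Minkowski) dimension: `limsup_{δ→0} log C_δ(E) / |log δ|`. -/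
noncomputable def ubdim (E : Set X) : EReal :=
  Filter.limsup (fun δ : ℝ => (capacity δ E).log / ((|Real.log δ| : ℝ) : EReal)) (𝓝[>] (0:ℝ))

/-- Upper packing dimension: infimum of `sup_n ubdim Eₙ` over countable covers of `E`. -/
noncomputable def updim (E : Set X) : EReal :=
  ⨅ (A : ℕ → Set X) (_ : E ⊆ ⋃ n, A n), ⨆ n, ubdim (A n)

/-- Lower packing dimension: infimum of `sup_n lbdim Eₙ` over countable covers of `E`. -/
noncomputable def lpdim (E : Set X) : EReal :=
  ⨅ (A : ℕ → Set X) (_ : E ⊆ ⋃ n, A n), ⨆ n, lbdim (A n)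

/-- Directed lower packing dimension: infimum of `sup_n lbdim Eₙ` over increasing
sequences with union `E`. -/
noncomputable def dpdim (E : Set X) : EReal :=
  ⨅ (A : ℕ → Set X) (_ : Monotone A ∧ (⋃ n, A n) = E), ⨆ n, lbdim (A n)

/-- A packing: a family of pairs (center, radius) with positive radii such that
`d(x_i, x_j) > r_i` for distinct members. -/
def IsPacking (π : Set (X × ℝ)) : Prop :=
  (∀ p ∈ π, 0 < p.2) ∧ ∀ p ∈ π, ∀ q ∈ π, p ≠ q → p.2 < dist p.1 q.1

/-- A packing of a set `E`: all centers belong to `E`. -/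
def IsPackingOf (π : Set (X × ℝ)) (E : Set X) : Prop :=
  IsPacking π ∧ ∀ p ∈ π, p.1 ∈ E

/-- A uniform packing: all radii equal. -/
def IsUniform (π : Set (X × ℝ)) : Prop := ∀ p ∈ π, ∀ q ∈ π, p.2 = q.2

/-- A scale: a set of positive reals with `0` in its closure. -/
def IsScale (Δ : Set ℝ) : Prop := Δ ⊆ Set.Ioi (0:ℝ) ∧ (0:ℝ) ∈ closure Δ

/-- A `(Δ,δ)`-packing of `E`: a packing of `E` with radii in `Δ ∩ (0, δ]`. -/
def IsScaledPacking (Δ : Set ℝ) (δ : ℝ) (π : Set (X × ℝ)) (E : Set X) : Prop :=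
  IsPackingOf π E ∧ ∀ p ∈ π, p.2 ∈ Δ ∧ p.2 ≤ δ

/-- `g(π) = Σ_i g(r_i)` for a packing `π`. -/
noncomputable def packVal (g : ℝ → ℝ) (π : Set (X × ℝ)) : ℝ≥0∞ :=
  ∑' p : π, ENNReal.ofReal (g p.1.2)

/-- `pack^g_{Δ,δ}(E) = sup{g(π) : π a (Δ,δ)-packing of E}`. -/
noncomputable def packPre (g : ℝ → ℝ) (Δ : Set ℝ) (δ : ℝ) (E : Set X) : ℝ≥0∞ :=
  ⨆ (π : Set (X × ℝ)) (_ : IsScaledPacking Δ δ π E), packVal g π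

/-- `pack^g_{Δ,0}(E) = inf_{δ>0} pack^g_{Δ,δ}(E)`. -/
noncomputable def packPre0 (g : ℝ → ℝ) (Δ : Set ℝ) (E : Set X) : ℝ≥0∞ :=
  ⨅ (δ : ℝ) (_ : 0 < δ), packPre g Δ δ E

/-- Uniform-packing (box) variant of `packPre`. -/
noncomputable def boxPre (g : ℝ → ℝ) (Δ : Set ℝ) (δ : ℝ) (E : Set X) : ℝ≥0∞ :=
  ⨆ (π : Set (X × ℝ)) (_ : IsScaledPacking Δ δ π E ∧ IsUniform π), packVal g π

/-- `boxm^g_{Δ,0}(E) = inf_{δ>0} boxm^g_{Δ,δ}(E)`. -/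
noncomputable def boxPre0 (g : ℝ → ℝ) (Δ : Set ℝ) (E : Set X) : ℝ≥0∞ :=
  ⨅ (δ : ℝ) (_ : 0 < δ), boxPre g Δ δ E

/-- Munroe's Method I construction. -/
noncomputable def methodI (τ : Set X → ℝ≥0∞) (E : Set X) : ℝ≥0∞ :=
  ⨅ (A : ℕ → Set X) (_ : E ⊆ ⋃ n, A n), ∑' n, τ (A n)

/-- The "directed" Method D construction. -/
noncomputable def methodD (τ : Set X → ℝ≥0∞) (E : Set X) : ℝ≥0∞ :=
  ⨅ (A : ℕ → Set X) (_ : Monotone A ∧ (⋃ n, A n) = E), ⨆ n, τ (A n)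

/-- The `Δ`-packing measure `pack^g_Δ` (Method I of `pack^g_{Δ,0}`). -/
noncomputable def packMeasure (g : ℝ → ℝ) (Δ : Set ℝ) : Set X → ℝ≥0∞ :=
  methodI (packPre0 g Δ)

/-- The `Δ`-box measure `boxm^g_Δ` (Method I of `boxm^g_{Δ,0}`). -/
noncomputable def boxMeasure (g : ℝ → ℝ) (Δ : Set ℝ) : Set X → ℝ≥0∞ :=
  methodI (boxPre0 g Δ)

/-- The upper packing pre-measure `upack^g_0 = pack^g_{(0,∞),0}`. -/
noncomputable def upackPre0 (g : ℝ → ℝ) : Set X → ℝ≥0∞ :=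
  packPre0 g (Set.Ioi (0:ℝ))

/-- The upper packing (= packing) measure `upack^g`. -/
noncomputable def upack (g : ℝ → ℝ) : Set X → ℝ≥0∞ :=
  methodI (upackPre0 g)

/-- The lower packing pre-measure `lpack^g_0(E) = inf_Δ pack^g_{Δ,0}(E)`. -/
noncomputable def lpackPre0 (g : ℝ → ℝ) (E : Set X) : ℝ≥0∞ :=
  ⨅ (Δ : Set ℝ) (_ : IsScale Δ), packPre0 g Δ E

/-- The lower packing measure `lpack^g`. -/
noncomputable def lpack (g : ℝ → ℝ) : Set X → ℝ≥0∞ :=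
  methodI (lpackPre0 g)

/-- The directed lower packing set function `dpack^g` (Method D of `lpack^g_0`). -/
noncomputable def dpack (g : ℝ → ℝ) : Set X → ℝ≥0∞ :=
  methodD (lpackPre0 g)

/-- The lower box (Hewitt–Stromberg) pre-measure `lboxm^g_0(E) = liminf_{δ→0} C_δ(E)·g(δ)`. -/
noncomputable def lboxPre0 (g : ℝ → ℝ) (E : Set X) : ℝ≥0∞ :=
  Filter.liminf (fun δ : ℝ => capacity δ E * ENNReal.ofReal (g δ)) (𝓝[>] (0:ℝ))

/-- The upper box pre-measure `uboxm^g_0(E) = limsup_{δ→0} C_δ(E)·g(δ)`. -/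
noncomputable def uboxPre0 (g : ℝ → ℝ) (E : Set X) : ℝ≥0∞ :=
  Filter.limsup (fun δ : ℝ => capacity δ E * ENNReal.ofReal (g δ)) (𝓝[>] (0:ℝ))

/-- The lower box (Hewitt–Stromberg) measure `lboxm^g`. -/
noncomputable def lbox (g : ℝ → ℝ) : Set X → ℝ≥0∞ := methodI (lboxPre0 g)

/-- The upper box measure `uboxm^g`. -/
noncomputable def ubox (g : ℝ → ℝ) : Set X → ℝ≥0∞ := methodI (uboxPre0 g)

/-- The directed lower box set function `dboxm^g` (Method D of `lboxm^g_0`). -/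
noncomputable def dbox (g : ℝ → ℝ) : Set X → ℝ≥0∞ := methodD (lboxPre0 g)

/-- A Hausdorff function: a nondecreasing positive function on `(0,∞)`. -/
def IsHausdorffFunction (g : ℝ → ℝ) : Prop :=
  MonotoneOn g (Set.Ioi (0:ℝ)) ∧ ∀ r : ℝ, 0 < r → 0 < g r

/-- `f ≺ g`: `lim_{r→0⁺} f(r)/g(r) = 0`. -/
def HPrec (f g : ℝ → ℝ) : Prop :=
  Tendsto (fun r => f r / g r) (𝓝[>] (0:ℝ)) (𝓝 0)

/-- The section `E_x = {y : (x,y) ∈ E}` of a set `E ⊆ X × Y`. -/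
def sect (E : Set (X × Y)) (x : X) : Set Y := {y | (x, y) ∈ E}

/-- The integral of a nonnegative function against a set function, via the usual
supremum over Borel simple functions (for a Borel measure this is the Lebesgue integral). -/
noncomputable def sLintegral (τ : Set X → ℝ≥0∞) (f : X → ℝ≥0∞) : ℝ≥0∞ :=
  letI := borel X
  ⨆ (s : SimpleFunc X ℝ≥0∞) (_ : ∀ x, s x ≤ f x), ∑ y ∈ s.range, y * τ (⇑s ⁻¹' {y})

/-- The upper integral `∫* f dτ = inf{∫ φ dτ : φ ≥ f Borel measurable}`. -/
noncomputable def upperIntegral (τ : Set X → ℝ≥0∞) (f : X → ℝ≥0∞) : ℝ≥0∞ :=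
  letI := borel X
  ⨅ (φ : X → ℝ≥0∞) (_ : ∀ x, f x ≤ φ x) (_ : Measurable φ), sLintegral τ φ

/-- `(Q,m)`-homogeneity of a set `A`: `C_r(E) ≤ Q (diam E / r)^m` for all `E ⊆ A`
and all `0 < r ≤ diam E`. -/
def IsHomog (Q m : ℝ) (A : Set X) : Prop :=
  ∀ E : Set X, E ⊆ A → ∀ r : ℝ, 0 < r → ENNReal.ofReal r ≤ EMetric.diam E →
    capacity r E ≤ ENNReal.ofReal Q * (EMetric.diam E / ENNReal.ofReal r) ^ m

/-- The Assouad dimension of a set. -/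
noncomputable def adim (A : Set X) : ℝ≥0∞ :=
  ⨅ (m : ℝ) (_ : 0 < m ∧ ∃ Q : ℝ, 0 ≤ Q ∧ IsHomog Q m A), ENNReal.ofReal m

/-- The countably stable modification of the Assouad dimension. -/
noncomputable def sadim (A : Set X) : ℝ≥0∞ :=
  ⨅ (S : ℕ → Set X) (_ : A ⊆ ⋃ n, S n), ⨆ n, adim (S n)

/-- The upper packing dimension of a Borel measure. -/
noncomputable def updimM {Z : Type*} [MetricSpace Z] [MeasurableSpace Z]
    (μ : Measure Z) : EReal :=
  ⨅ (E : Set Z) (_ : MeasurableSet[borel Z] E ∧ 0 < μ E), updim E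

/-- The lower packing dimension of a Borel measure. -/
noncomputable def lpdimM {Z : Type*} [MetricSpace Z] [MeasurableSpace Z]
    (μ : Measure Z) : EReal :=
  ⨅ (E : Set Z) (_ : MeasurableSet[borel Z] E ∧ 0 < μ E), lpdim E

/-- Euclidean space `ℝ^m`. -/
abbrev Euc (m : ℕ) := EuclideanSpace ℝ (Fin m)

end ZPaper
open Filter MeasureTheory Set ZPaper
open scoped ENNReal NNReal Topology

section AuxZP
open Filter Set ZPaper
open scoped ENNReal Topology

/-! ### EReal helpers -/

noncomputable def ZPaddIso (s : ℝ) : EReal ≃o EReal where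
  toFun x := x + (s : EReal)
  invFun x := x - (s : EReal)
  left_inv _ := EReal.add_sub_cancel_right
  right_inv _ := EReal.sub_add_cancel
  map_rel_iff' := @fun _ _ => (EReal.addLECancellable_coe s).add_le_add_iff_right

lemma ZPliminf_add (f : ℝ → EReal) (l : Filter ℝ) (s : ℝ) :
    Filter.liminf (fun x => f x + (s : EReal)) l = Filter.liminf f l + (s : EReal) :=
  ((ZPaddIso s).liminf_apply).symm

lemma ZPlimsup_add (f : ℝ → EReal) (l : Filter ℝ) (s : ℝ) :
    Filter.limsup (fun x => f x + (s : EReal)) l = Filter.limsup f l + (s : EReal) :=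
  ((ZPaddIso s).limsup_apply).symm

lemma ZPiSup_add (f : ℕ → EReal) (s : ℝ) :
    (⨆ n, f n) + (s : EReal) = ⨆ n, (f n + (s : EReal)) :=
  (ZPaddIso s).map_iSup f

lemma ZPdiv_shift (x : EReal) {L : ℝ} (hL : 0 < L) (s : ℝ) :
    (x + ((s * L : ℝ) : EReal)) / (L : EReal) = x / (L : EReal) + (s : EReal) := by
  have hL0 : (0 : EReal) < (L : EReal) := EReal.coe_pos.mpr hL
  have hLt : (L : EReal) ≠ ⊤ := EReal.coe_ne_top L
  induction x with
  | bot =>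
      rw [EReal.bot_add, EReal.bot_div_of_pos_ne_top hL0 hLt, EReal.bot_add]
  | coe x =>
      rw [← EReal.coe_add, ← EReal.coe_div, ← EReal.coe_div, ← EReal.coe_add]
      norm_cast
      field_simp
  | top =>
      rw [EReal.top_add_coe, EReal.top_div_of_pos_ne_top hL0 hLt, EReal.top_add_coe]

lemma ZPadd_le_of_forall_coe_lt {a b c : EReal} (h : ∀ s : ℝ, (s : EReal) < b → a + s ≤ c) :
    a + b ≤ c := by
  rcases eq_or_ne b ⊥ with rfl | hb
  · rw [EReal.add_bot]; exact bot_le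
  rcases eq_or_ne a ⊥ with rfl | ha
  · rw [EReal.bot_add]; exact bot_le
  refine le_of_forall_lt_imp_le_of_dense fun d hd => ?_
  obtain ⟨r, hdr, hrb⟩ := EReal.exists_between_coe_real hd
  have key : ∃ s : ℝ, (s : EReal) < b ∧ (r : EReal) ≤ a + s := by
    induction b with
    | bot => exact absurd rfl hb
    | coe b =>
        induction a with
        | bot => exact absurd rfl ha
        | coe a =>
            have hrb' : (r : EReal) < ((a + b : ℝ) : EReal) := by
              rwa [← EReal.coe_add] at hrb
            have hr : r < a + b := by exact_mod_cast hrb'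
            refine ⟨r - a, by exact_mod_cast (by linarith : r - a < b), ?_⟩
            rw [← EReal.coe_add]
            norm_num
        | top =>
            refine ⟨b - 1, by exact_mod_cast (by linarith : b - 1 < b), ?_⟩
            rw [EReal.top_add_coe]; exact le_top
    | top =>
        induction a with
        | bot => exact absurd rfl ha
        | coe a =>
            refine ⟨r - a, EReal.coe_lt_top _, ?_⟩
            rw [← EReal.coe_add]; norm_num
        | top => exact ⟨0, EReal.coe_lt_top _, by rw [EReal.top_add_coe]; exact le_top⟩
  obtain ⟨s, hsb, hrs⟩ := key
  exact le_trans (le_trans hdr.le hrs) (h s hsb)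

lemma ZPle_of_forall_add_eps {x y : EReal} (h : ∀ ε : ℝ, 0 < ε → x ≤ y + (ε : EReal)) :
    x ≤ y := by
  by_contra hc
  push_neg at hc
  obtain ⟨r, hyr, hrx⟩ := EReal.exists_between_coe_real hc
  induction y with
  | bot =>
      have h1 := h 1 one_pos
      rw [EReal.bot_add] at h1
      have : x = ⊥ := le_bot_iff.mp h1
      rw [this] at hrx
      exact absurd hrx (by simp)
  | coe y =>
      have hry : y < r := by exact_mod_cast hyr
      have h2 := h (r - y) (by linarith)
      rw [← EReal.coe_add] at h2
      have hx : x ≤ (r : EReal) := by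
        have he : y + (r - y) = r := by ring
        rwa [he] at h2
      exact absurd hrx (not_lt.mpr hx)
  | top => exact absurd hc (not_lt.mpr le_top)

/-! ### Capacity lemmas -/

variable {X : Type*} [MetricSpace X] {Y : Type*} [MetricSpace Y]

lemma ZPle_capacity {δ : ℝ} {E : Set X} {F : Finset X} (h1 : ↑F ⊆ E)
    (h2 : ∀ x ∈ F, ∀ y ∈ F, x ≠ y → δ < dist x y) :
    (F.card : ℝ≥0∞) ≤ capacity δ E :=
  le_iSup₂ (f := fun (F : Finset X) (_ : ↑F ⊆ E ∧ ∀ x ∈ F, ∀ y ∈ F, x ≠ y → δ < dist x y)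
    => (F.card : ℝ≥0∞)) F ⟨h1, h2⟩

lemma ZPcapacity_mono {δ : ℝ} {E E' : Set X} (h : E ⊆ E') : capacity δ E ≤ capacity δ E' :=
  iSup₂_le fun F hF => ZPle_capacity (subset_trans hF.1 h) hF.2

lemma ZPexists_sep_card_ge {δ : ℝ} {E : Set X} {c : ℝ≥0∞} (hc : c ≠ ⊤)
    (h : c ≤ capacity δ E) :
    ∃ F : Finset X, ↑F ⊆ E ∧ (∀ x ∈ F, ∀ y ∈ F, x ≠ y → δ < dist x y) ∧ c ≤ F.card := by
  rcases eq_or_ne c 0 with rfl | hc0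
  · exact ⟨∅, by simp, by simp, by simp⟩
  by_contra hcon
  push_neg at hcon
  set n : ℕ := ⌈c.toReal⌉₊ with hn
  have hct : 0 < c.toReal := ENNReal.toReal_pos hc0 hc
  have hn1 : 1 ≤ n := Nat.one_le_ceil_iff.mpr hct
  have hcap : capacity δ E ≤ ((n - 1 : ℕ) : ℝ≥0∞) := by
    refine iSup₂_le fun F hF => ?_
    have hlt : (F.card : ℝ≥0∞) < c := hcon F hF.1 hF.2
    have hle : (F.card : ℝ) < c.toReal := by
      have := (ENNReal.toReal_lt_toReal (by simp) hc).mpr hlt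
      simpa using this
    have : F.card < n := Nat.lt_ceil.mpr hle
    exact_mod_cast Nat.le_sub_one_of_lt this
  have hlt2 : ((n - 1 : ℕ) : ℝ≥0∞) < c := by
    have h1 : ((n - 1 : ℕ) : ℝ) < c.toReal := Nat.lt_ceil.mp (Nat.sub_lt hn1 one_pos)
    have := (ENNReal.ofReal_lt_ofReal_iff hct).mpr h1
    rwa [ENNReal.ofReal_natCast, ENNReal.ofReal_toReal hc] at this
  exact absurd (h.trans hcap) (not_le.mpr hlt2)

lemma ZPcapacity_prod_ge {δ : ℝ} {A : Set (X × Y)} {B : Set X} {c : ℝ≥0∞} (hc : c ≠ ⊤)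
    (h : ∀ x ∈ B, c ≤ capacity δ (sect A x)) :
    capacity δ B * c ≤ capacity δ A := by
  classical
  rw [capacity, ENNReal.iSup_mul]
  refine iSup_le fun F => ?_
  rw [ENNReal.iSup_mul]
  refine iSup_le fun hF => ?_
  obtain ⟨hFB, hFsep⟩ := hF
  have hx : ∀ x : X, ∃ G : Finset Y, x ∈ F →
      (↑G ⊆ sect A x ∧ (∀ y ∈ G, ∀ z ∈ G, y ≠ z → δ < dist y z) ∧ c ≤ G.card) := by
    intro x
    by_cases hxF : x ∈ F
    · obtain ⟨G, hG⟩ := ZPexists_sep_card_ge hc (h x (hFB hxF))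
      exact ⟨G, fun _ => hG⟩
    · exact ⟨∅, fun hx => absurd hx hxF⟩
  choose g hg using hx
  set P : Finset (X × Y) := F.biUnion (fun x => (g x).image (fun y => (x, y))) with hP
  have hPA : ↑P ⊆ A := by
    intro p hp
    simp only [hP, Finset.coe_biUnion, mem_iUnion, Finset.coe_image, mem_image,
      Finset.mem_coe] at hp
    obtain ⟨x, hxF, y, hyG, rfl⟩ := hp
    exact (hg x hxF).1 hyG
  have hPsep : ∀ p ∈ P, ∀ q ∈ P, p ≠ q → δ < dist p q := by
    intro p hp q hq hpq
    simp only [hP, Finset.mem_biUnion, Finset.mem_image] at hp hq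
    obtain ⟨x, hxF, y, hyG, rfl⟩ := hp
    obtain ⟨x', hxF', y', hyG', rfl⟩ := hq
    rw [Prod.dist_eq]
    rcases eq_or_ne x x' with rfl | hxx
    · have hyy : y ≠ y' := by
        intro hy; exact hpq (by rw [hy])
      exact lt_max_of_lt_right ((hg x hxF).2.1 y hyG y' hyG' hyy)
    · exact lt_max_of_lt_left (hFsep x hxF x' hxF' hxx)
  have hcard : (F.card : ℝ≥0∞) * c ≤ (P.card : ℝ≥0∞) := by
    have hdisj : ∀ x ∈ F, ∀ x' ∈ F, x ≠ x' →
        Disjoint ((g x).image (fun y => (x, y))) ((g x').image (fun y => (x', y))) := by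
      intro x _ x' _ hxx
      simp only [Finset.disjoint_left, Finset.mem_image]
      rintro p ⟨y, _, rfl⟩ ⟨y', _, h⟩
      exact hxx (by injection h.symm)
    rw [hP, Finset.card_biUnion hdisj]
    push_cast
    calc (F.card : ℝ≥0∞) * c = ∑ _x ∈ F, c := by
          rw [Finset.sum_const, nsmul_eq_mul]
      _ ≤ ∑ x ∈ F, (((g x).image (fun y => (x, y))).card : ℝ≥0∞) := by
          refine Finset.sum_le_sum fun x hxF => ?_
          rw [Finset.card_image_of_injective _ (fun a b hab => by injection hab)]
          exact (hg x hxF).2.2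
      _ = _ := by push_cast; ring
  exact hcard.trans (ZPle_capacity hPA hPsep)

lemma ZPcapacity_union_le {δ : ℝ} {E F : Set X} :
    capacity δ (E ∪ F) ≤ capacity δ E + capacity δ F := by
  classical
  refine iSup₂_le fun P hP => ?_
  obtain ⟨hPs, hPsep⟩ := hP
  have h1 : ((P.filter (· ∈ E)).card : ℝ≥0∞) ≤ capacity δ E := by
    refine ZPle_capacity ?_ ?_
    · intro x hx
      simp only [Finset.coe_filter, mem_setOf_eq] at hx
      exact hx.2
    · intro x hx y hy
      exact hPsep x (Finset.mem_of_mem_filter x hx) y (Finset.mem_of_mem_filter y hy)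
  have h2 : ((P.filter (· ∉ E)).card : ℝ≥0∞) ≤ capacity δ F := by
    refine ZPle_capacity ?_ ?_
    · intro x hx
      simp only [Finset.coe_filter, mem_setOf_eq] at hx
      rcases hPs hx.1 with h | h
      · exact absurd h hx.2
      · exact h
    · intro x hx y hy
      exact hPsep x (Finset.mem_of_mem_filter x hx) y (Finset.mem_of_mem_filter y hy)
  calc (P.card : ℝ≥0∞) = ((P.filter (· ∈ E)).card + (P.filter (· ∉ E)).card : ℕ) := by
        rw [Finset.card_filter_add_card_filter_not]
    _ = ((P.filter (· ∈ E)).card : ℝ≥0∞) + ((P.filter (· ∉ E)).card : ℝ≥0∞) := by push_cast; rfl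
    _ ≤ _ := add_le_add h1 h2

/-! ### Dimension function and shift lemmas -/

noncomputable def ZPdimf {W : Type*} [MetricSpace W] (E : Set W) (δ : ℝ) : EReal :=
  (capacity δ E).log / ((|Real.log δ| : ℝ) : EReal)

lemma ZPlbdim_eq {W : Type*} [MetricSpace W] (E : Set W) :
    lbdim E = Filter.liminf (ZPdimf E) (𝓝[>] (0 : ℝ)) := rfl

lemma ZPubdim_eq {W : Type*} [MetricSpace W] (E : Set W) :
    ubdim E = Filter.limsup (ZPdimf E) (𝓝[>] (0 : ℝ)) := rfl

lemma ZPpointwise_ineq {δ s : ℝ} (h0 : 0 < δ) (h1 : δ < 1) {CA CB : ℝ≥0∞}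
    (h : CB * ENNReal.ofReal (δ ^ (-s)) ≤ CA) :
    CB.log / ((|Real.log δ| : ℝ) : EReal) + (s : EReal)
      ≤ CA.log / ((|Real.log δ| : ℝ) : EReal) := by
  have hneg : Real.log δ < 0 := Real.log_neg h0 h1
  have habs : |Real.log δ| = -Real.log δ := abs_of_neg hneg
  have hL : 0 < |Real.log δ| := abs_pos.mpr hneg.ne
  have hlog : ENNReal.log (CB * ENNReal.ofReal (δ ^ (-s)))
      = CB.log + ((s * |Real.log δ| : ℝ) : EReal) := by
    rw [ENNReal.log_mul_add, ENNReal.log_ofReal_of_pos (Real.rpow_pos_of_pos h0 _),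
      Real.log_rpow h0, habs]
    norm_num
  calc CB.log / ((|Real.log δ| : ℝ) : EReal) + (s : EReal)
      = (CB.log + ((s * |Real.log δ| : ℝ) : EReal)) / ((|Real.log δ| : ℝ) : EReal) :=
        (ZPdiv_shift _ hL s).symm
    _ = (ENNReal.log (CB * ENNReal.ofReal (δ ^ (-s)))) / ((|Real.log δ| : ℝ) : EReal) := by
        rw [hlog]
    _ ≤ CA.log / ((|Real.log δ| : ℝ) : EReal) :=
        EReal.div_le_div_right_of_nonneg (EReal.coe_nonneg.mpr hL.le) (ENNReal.log_monotone h)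

lemma ZPlbdim_shift {W Z : Type*} [MetricSpace W] [MetricSpace Z] {B : Set W} {A : Set Z}
    {s : ℝ} (h : ∀ᶠ δ in 𝓝[>] (0 : ℝ), capacity δ B * ENNReal.ofReal (δ ^ (-s)) ≤ capacity δ A) :
    lbdim B + (s : EReal) ≤ lbdim A := by
  have hev : ∀ᶠ δ in 𝓝[>] (0 : ℝ), ZPdimf B δ + (s : EReal) ≤ ZPdimf A δ := by
    filter_upwards [h, Ioo_mem_nhdsGT_of_mem (⟨le_refl (0:ℝ), one_pos⟩ : (0:ℝ) ∈ Ico (0:ℝ) 1)]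
      with δ hδ hδ1
    exact ZPpointwise_ineq hδ1.1 hδ1.2 hδ
  calc lbdim B + (s : EReal)
      = Filter.liminf (fun δ => ZPdimf B δ + (s : EReal)) (𝓝[>] (0 : ℝ)) :=
        (ZPliminf_add (ZPdimf B) _ s).symm
    _ ≤ Filter.liminf (ZPdimf A) (𝓝[>] (0 : ℝ)) := liminf_le_liminf hev
    _ = lbdim A := (ZPlbdim_eq A).symm

lemma ZPubdim_shift {W Z : Type*} [MetricSpace W] [MetricSpace Z] {B : Set W} {A : Set Z}
    {s : ℝ} (h : ∀ᶠ δ in 𝓝[>] (0 : ℝ), capacity δ B * ENNReal.ofReal (δ ^ (-s)) ≤ capacity δ A) :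
    ubdim B + (s : EReal) ≤ ubdim A := by
  have hev : ∀ᶠ δ in 𝓝[>] (0 : ℝ), ZPdimf B δ + (s : EReal) ≤ ZPdimf A δ := by
    filter_upwards [h, Ioo_mem_nhdsGT_of_mem (⟨le_refl (0:ℝ), one_pos⟩ : (0:ℝ) ∈ Ico (0:ℝ) 1)]
      with δ hδ hδ1
    exact ZPpointwise_ineq hδ1.1 hδ1.2 hδ
  calc ubdim B + (s : EReal)
      = Filter.limsup (fun δ => ZPdimf B δ + (s : EReal)) (𝓝[>] (0 : ℝ)) :=
        (ZPlimsup_add (ZPdimf B) _ s).symm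
    _ ≤ Filter.limsup (ZPdimf A) (𝓝[>] (0 : ℝ)) := limsup_le_limsup hev
    _ = ubdim A := (ZPubdim_eq A).symm

lemma ZPexists_of_lt_lbdim {W : Type*} [MetricSpace W] {E : Set W} {s : ℝ}
    (h : (s : EReal) < lbdim E) :
    ∃ η : ℝ, 0 < η ∧ ∀ δ : ℝ, 0 < δ → δ < η → ENNReal.ofReal (δ ^ (-s)) ≤ capacity δ E := by
  have h1 : ∀ᶠ δ in 𝓝[>] (0 : ℝ), (s : EReal) < ZPdimf E δ := eventually_lt_of_lt_liminf h
  have h2 : {δ : ℝ | (s : EReal) < ZPdimf E δ} ∩ Ioo (0:ℝ) 1 ∈ 𝓝[>] (0 : ℝ) :=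
    Filter.inter_mem h1 (Ioo_mem_nhdsGT_of_mem ⟨le_refl (0:ℝ), one_pos⟩)
  rw [mem_nhdsGT_iff_exists_Ioo_subset] at h2
  obtain ⟨u, hu, hsub⟩ := h2
  refine ⟨min u 1, lt_min hu one_pos, fun δ h0 hδ => ?_⟩
  have hmem := hsub ⟨h0, lt_of_lt_of_le hδ (min_le_left _ _)⟩
  obtain ⟨hsd, hδ0, hδ1⟩ := hmem
  have hneg : Real.log δ < 0 := Real.log_neg hδ0 hδ1
  have hL : (0 : ℝ) < |Real.log δ| := abs_pos.mpr hneg.ne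
  have hmul : ((s * |Real.log δ| : ℝ) : EReal) ≤ (capacity δ E).log := by
    rw [EReal.coe_mul]
    exact (EReal.le_div_iff_mul_le (by exact_mod_cast hL) (EReal.coe_ne_top _)).mp hsd.le
  have hlog : ENNReal.log (ENNReal.ofReal (δ ^ (-s))) ≤ (capacity δ E).log := by
    rw [ENNReal.log_ofReal_of_pos (Real.rpow_pos_of_pos hδ0 _), Real.log_rpow hδ0]

    have : -s * Real.log δ = s * |Real.log δ| := by
      rw [abs_of_neg hneg]; ring
    rw [this]
    exact hmul
  exact ENNReal.log_le_log_iff.mp hlog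

/-! ### Good sets -/

def ZPgood (s : ℝ) (E : Set (X × Y)) (m : ℕ) : Set X :=
  {x | ∀ δ : ℝ, 0 < δ → δ < 1 / (m + 1 : ℝ) →
    ENNReal.ofReal (δ ^ (-s)) ≤ capacity δ (sect E x)}

lemma ZPgood_subset {s : ℝ} {E E' : Set (X × Y)} {m m' : ℕ} (hE : E ⊆ E') (hm : m ≤ m') :
    ZPgood s E m ⊆ ZPgood s E' m' := by
  intro x hx δ h0 hδ
  have hmm : (1 : ℝ) / (m' + 1 : ℝ) ≤ 1 / (m + 1 : ℝ) := by
    apply one_div_le_one_div_of_le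
    · positivity
    · exact_mod_cast by omega
  refine le_trans (hx δ h0 (lt_of_lt_of_le hδ hmm)) (ZPcapacity_mono ?_)
  intro y hy
  exact hE hy

lemma ZPgood_mem {s : ℝ} {E : Set (X × Y)} {x : X} (h : (s : EReal) < lbdim (sect E x)) :
    ∃ m : ℕ, x ∈ ZPgood s E m := by
  obtain ⟨η, hη, hcap⟩ := ZPexists_of_lt_lbdim h
  obtain ⟨m, hm⟩ := exists_nat_one_div_lt hη
  exact ⟨m, fun δ h0 h1 => hcap δ h0 (h1.trans hm)⟩

lemma ZPgood_ev {s : ℝ} {E : Set (X × Y)} {m : ℕ} :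
    ∀ᶠ δ in 𝓝[>] (0 : ℝ),
      capacity δ (ZPgood s E m) * ENNReal.ofReal (δ ^ (-s)) ≤ capacity δ E := by
  have hpos : (0 : ℝ) < 1 / (m + 1 : ℝ) := by positivity
  filter_upwards [Ioo_mem_nhdsGT_of_mem (⟨le_refl (0:ℝ), hpos⟩ : (0:ℝ) ∈ Ico (0:ℝ) (1/(m+1:ℝ)))]
    with δ hδ
  exact ZPcapacity_prod_ge ENNReal.ofReal_ne_top (fun x hx => hx δ hδ.1 hδ.2)

lemma ZPgood_lbdim {s : ℝ} {E : Set (X × Y)} {m : ℕ} :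
    lbdim (ZPgood s E m) + (s : EReal) ≤ lbdim E :=
  ZPlbdim_shift ZPgood_ev

lemma ZPgood_ubdim {s : ℝ} {E : Set (X × Y)} {m : ℕ} :
    ubdim (ZPgood s E m) + (s : EReal) ≤ ubdim E :=
  ZPubdim_shift ZPgood_ev

/-! ### ubdim of finite unions -/

lemma ZPubdim_union {E F : Set X} : ubdim (E ∪ F) ≤ max (ubdim E) (ubdim F) := by
  refine ZPle_of_forall_add_eps fun ε hε => ?_
  have htend : Tendsto (fun δ : ℝ => Real.log 2 / |Real.log δ|) (𝓝[>] (0:ℝ)) (𝓝 0) :=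
    Tendsto.div_atTop tendsto_const_nhds
      (tendsto_abs_atBot_atTop.comp Real.tendsto_log_nhdsGT_zero)
  have hev : ∀ᶠ δ in 𝓝[>] (0 : ℝ),
      ZPdimf (E ∪ F) δ ≤ max (ZPdimf E δ) (ZPdimf F δ) + (ε : EReal) := by
    filter_upwards [htend.eventually (Iio_mem_nhds hε),
      Ioo_mem_nhdsGT_of_mem (⟨le_refl (0:ℝ), one_pos⟩ : (0:ℝ) ∈ Ico (0:ℝ) 1)] with δ hδε hδ1
    have hneg : Real.log δ < 0 := Real.log_neg hδ1.1 hδ1.2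
    have hL : (0 : ℝ) < |Real.log δ| := abs_pos.mpr hneg.ne
    have hcap : capacity δ (E ∪ F) ≤ 2 * max (capacity δ E) (capacity δ F) := by
      refine ZPcapacity_union_le.trans ?_
      rw [two_mul]
      exact add_le_add (le_max_left _ _) (le_max_right _ _)
    have hlog2 : ENNReal.log 2 = ((Real.log 2 : ℝ) : EReal) := by
      rw [show (2 : ℝ≥0∞) = ENNReal.ofReal 2 by norm_num,
        ENNReal.log_ofReal_of_pos two_pos]
    have hlogmax : ENNReal.log (max (capacity δ E) (capacity δ F))
        = max (capacity δ E).log (capacity δ F).log :=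
      ENNReal.log_monotone.map_max
    have hlog : (capacity δ (E ∪ F)).log
        ≤ max (capacity δ E).log (capacity δ F).log
            + (((Real.log 2 / |Real.log δ|) * |Real.log δ| : ℝ) : EReal) := by
      have h2 : (Real.log 2 / |Real.log δ|) * |Real.log δ| = Real.log 2 := by
        field_simp
      rw [h2]
      calc (capacity δ (E ∪ F)).log
          ≤ ENNReal.log (2 * max (capacity δ E) (capacity δ F)) := ENNReal.log_monotone hcap
        _ = ENNReal.log 2 + ENNReal.log (max (capacity δ E) (capacity δ F)) :=
            ENNReal.log_mul_add
        _ = max (capacity δ E).log (capacity δ F).log + ((Real.log 2 : ℝ) : EReal) := by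
            rw [hlog2, hlogmax, add_comm]
    have hdivmax : max (capacity δ E).log (capacity δ F).log / ((|Real.log δ| : ℝ) : EReal)
        = max (ZPdimf E δ) (ZPdimf F δ) :=
      (EReal.monotone_div_right_of_nonneg (by exact_mod_cast hL.le)).map_max
    calc ZPdimf (E ∪ F) δ
        ≤ (max (capacity δ E).log (capacity δ F).log
            + (((Real.log 2 / |Real.log δ|) * |Real.log δ| : ℝ) : EReal))
              / ((|Real.log δ| : ℝ) : EReal) :=
          EReal.div_le_div_right_of_nonneg (EReal.coe_nonneg.mpr hL.le) hlog
      _ = max (capacity δ E).log (capacity δ F).log / ((|Real.log δ| : ℝ) : EReal)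
            + ((Real.log 2 / |Real.log δ| : ℝ) : EReal) := ZPdiv_shift _ hL _
      _ = max (ZPdimf E δ) (ZPdimf F δ) + ((Real.log 2 / |Real.log δ| : ℝ) : EReal) := by
          rw [hdivmax]
      _ ≤ max (ZPdimf E δ) (ZPdimf F δ) + (ε : EReal) := by
          apply add_le_add_right
          exact_mod_cast (le_of_lt hδε)
  calc ubdim (E ∪ F) = Filter.limsup (ZPdimf (E ∪ F)) (𝓝[>] (0:ℝ)) := ZPubdim_eq _
    _ ≤ Filter.limsup (fun δ => max (ZPdimf E δ) (ZPdimf F δ) + (ε : EReal)) (𝓝[>] (0:ℝ)) :=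
        limsup_le_limsup hev
    _ = Filter.limsup (fun δ => max (ZPdimf E δ) (ZPdimf F δ)) (𝓝[>] (0:ℝ)) + (ε : EReal) :=
        ZPlimsup_add _ _ ε
    _ = max (Filter.limsup (ZPdimf E) (𝓝[>] (0:ℝ))) (Filter.limsup (ZPdimf F) (𝓝[>] (0:ℝ)))
          + (ε : EReal) := by rw [limsup_max]
    _ = max (ubdim E) (ubdim F) + (ε : EReal) := by rw [← ZPubdim_eq, ← ZPubdim_eq]

lemma ZPubdim_acc {E : ℕ → Set X} (n : ℕ) :
    ubdim (⋃ k ∈ Finset.range (n + 1), E k) ≤ ⨆ k, ubdim (E k) := by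
  induction n with
  | zero =>
      have : (⋃ k ∈ Finset.range 1, E k) = E 0 := by
        simp
      rw [this]
      exact le_iSup (fun k => ubdim (E k)) 0
  | succ n ih =>
      have hset : (⋃ k ∈ Finset.range (n + 2), E k)
          = (⋃ k ∈ Finset.range (n + 1), E k) ∪ E (n + 1) := by
        ext p
        simp only [mem_iUnion, Finset.mem_range, mem_union]
        constructor
        · rintro ⟨k, hk, hp⟩
          rcases Nat.lt_succ_iff_lt_or_eq.mp hk with h | rfl
          · exact Or.inl ⟨k, h, hp⟩
          · exact Or.inr hp
        · rintro (⟨k, hk, hp⟩ | hp)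
          · exact ⟨k, by omega, hp⟩
          · exact ⟨n + 1, by omega, hp⟩
      rw [hset]
      exact ZPubdim_union.trans (max_le ih (le_iSup (fun k => ubdim (E k)) (n + 1)))

/-! ### The three parts -/

lemma ZPpart3 : lpdim (univ : Set X) + lpdim (univ : Set Y) ≤ lpdim (univ : Set (X × Y)) := by
  refine le_iInf fun E => le_iInf fun hE => ZPadd_le_of_forall_coe_lt fun s hs => ?_
  set G : ℕ → Set X := fun k => ZPgood s (E (Nat.unpair k).1) (Nat.unpair k).2 with hG
  have hcov : (univ : Set X) ⊆ ⋃ k, G k := by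
    intro x _
    have hY : (univ : Set Y) ⊆ ⋃ n, sect (E n) x := by
      intro y _
      obtain ⟨n, hn⟩ := mem_iUnion.mp (hE (mem_univ (x, y)))
      exact mem_iUnion.mpr ⟨n, hn⟩
    have h1 : lpdim (univ : Set Y) ≤ ⨆ n, lbdim (sect (E n) x) :=
      iInf_le_of_le (fun n => sect (E n) x) (iInf_le _ hY)
    obtain ⟨n, hn⟩ := lt_iSup_iff.mp (hs.trans_le h1)
    obtain ⟨m, hm⟩ := ZPgood_mem hn
    exact mem_iUnion.mpr ⟨Nat.pair n m, by simpa [hG, Nat.unpair_pair] using hm⟩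
  have h2 : lpdim (univ : Set X) ≤ ⨆ k, lbdim (G k) := iInf_le_of_le G (iInf_le _ hcov)
  calc lpdim (univ : Set X) + (s : EReal) ≤ (⨆ k, lbdim (G k)) + (s : EReal) :=
        add_le_add_left h2 _
    _ = ⨆ k, (lbdim (G k) + (s : EReal)) := ZPiSup_add _ s
    _ ≤ ⨆ n, lbdim (E n) :=
        iSup_le fun k => ZPgood_lbdim.trans (le_iSup (fun n => lbdim (E n)) _)

lemma ZPpart2 : dpdim (univ : Set X) + dpdim (univ : Set Y) ≤ dpdim (univ : Set (X × Y)) := by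
  refine le_iInf fun A => le_iInf fun hA => ZPadd_le_of_forall_coe_lt fun s hs => ?_
  set B : ℕ → Set X := fun k => ZPgood s (A k) k with hB
  have hmono : Monotone B := fun i j hij => ZPgood_subset (hA.1 hij) hij
  have hunion : (⋃ k, B k) = univ := by
    refine eq_univ_of_univ_subset fun x _ => ?_
    have hsectmono : Monotone fun n => sect (A n) x := fun i j hij y hy => hA.1 hij hy
    have hsectunion : (⋃ n, sect (A n) x) = univ := by
      refine eq_univ_of_univ_subset fun y _ => ?_
      have hxy : (x, y) ∈ ⋃ n, A n := by rw [hA.2]; exact mem_univ _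
      obtain ⟨n, hn⟩ := mem_iUnion.mp hxy
      exact mem_iUnion.mpr ⟨n, hn⟩
    have h1 : dpdim (univ : Set Y) ≤ ⨆ n, lbdim (sect (A n) x) :=
      iInf_le_of_le (fun n => sect (A n) x) (iInf_le _ ⟨hsectmono, hsectunion⟩)
    obtain ⟨n, hn⟩ := lt_iSup_iff.mp (hs.trans_le h1)
    obtain ⟨m, hm⟩ := ZPgood_mem hn
    exact mem_iUnion.mpr
      ⟨max n m, ZPgood_subset (hA.1 (le_max_left n m)) (le_max_right n m) hm⟩
  have h2 : dpdim (univ : Set X) ≤ ⨆ k, lbdim (B k) :=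
    iInf_le_of_le B (iInf_le _ ⟨hmono, hunion⟩)
  calc dpdim (univ : Set X) + (s : EReal) ≤ (⨆ k, lbdim (B k)) + (s : EReal) :=
        add_le_add_left h2 _
    _ = ⨆ k, (lbdim (B k) + (s : EReal)) := ZPiSup_add _ s
    _ ≤ ⨆ n, lbdim (A n) :=
        iSup_le fun k => ZPgood_lbdim.trans (le_iSup (fun n => lbdim (A n)) _)

lemma ZPpart1 : updim (univ : Set X) + dpdim (univ : Set Y) ≤ updim (univ : Set (X × Y)) := by
  refine le_iInf fun E => le_iInf fun hE => ZPadd_le_of_forall_coe_lt fun s hs => ?_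
  set Ac : ℕ → Set (X × Y) := fun n => ⋃ k ∈ Finset.range (n + 1), E k with hAc
  have hAcMono : Monotone Ac := by
    intro i j hij p hp
    simp only [hAc, mem_iUnion, Finset.mem_range] at hp ⊢
    obtain ⟨k, hk, hkp⟩ := hp
    exact ⟨k, by omega, hkp⟩
  set G : ℕ → Set X := fun k => ZPgood s (Ac (Nat.unpair k).1) (Nat.unpair k).2 with hG
  have hcov : (univ : Set X) ⊆ ⋃ k, G k := by
    intro x _
    have hsectmono : Monotone fun n => sect (Ac n) x := fun i j hij y hy => hAcMono hij hy
    have hsectunion : (⋃ n, sect (Ac n) x) = univ := by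
      refine eq_univ_of_univ_subset fun y _ => ?_
      obtain ⟨n, hn⟩ := mem_iUnion.mp (hE (mem_univ (x, y)))
      refine mem_iUnion.mpr ⟨n, ?_⟩
      show (x, y) ∈ Ac n
      simp only [hAc, mem_iUnion, Finset.mem_range]
      exact ⟨n, by omega, hn⟩
    have h1 : dpdim (univ : Set Y) ≤ ⨆ n, lbdim (sect (Ac n) x) :=
      iInf_le_of_le (fun n => sect (Ac n) x) (iInf_le _ ⟨hsectmono, hsectunion⟩)
    obtain ⟨n, hn⟩ := lt_iSup_iff.mp (hs.trans_le h1)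
    obtain ⟨m, hm⟩ := ZPgood_mem hn
    exact mem_iUnion.mpr ⟨Nat.pair n m, by simpa [hG, Nat.unpair_pair] using hm⟩
  have h2 : updim (univ : Set X) ≤ ⨆ k, ubdim (G k) := iInf_le_of_le G (iInf_le _ hcov)
  calc updim (univ : Set X) + (s : EReal) ≤ (⨆ k, ubdim (G k)) + (s : EReal) :=
        add_le_add_left h2 _
    _ = ⨆ k, (ubdim (G k) + (s : EReal)) := ZPiSup_add _ s
    _ ≤ ⨆ n, ubdim (E n) :=
        iSup_le fun k => ZPgood_ubdim.trans (ZPubdim_acc _)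

end AuxZP


/-- Corollary `dim:rect`. For any metric spaces `X`, `Y`:
(i) `updim (X × Y) ≥ updim X + dpdim Y`; (ii) `dpdim (X × Y) ≥ dpdim X + dpdim Y`;
(iii) `lpdim (X × Y) ≥ lpdim X + lpdim Y`. -/
theorem stmt2 {X Y : Type*} [MetricSpace X] [MetricSpace Y] :
    (updim (Set.univ : Set (X × Y)) ≥ updim (Set.univ : Set X) + dpdim (Set.univ : Set Y)) ∧
    (dpdim (Set.univ : Set (X × Y)) ≥ dpdim (Set.univ : Set X) + dpdim (Set.univ : Set Y)) ∧
    (lpdim (Set.univ : Set (X × Y)) ≥ lpdim (Set.univ : Set X) + lpdim (Set.univ : Set Y)) := by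
  exact ⟨ZPpart1, ZPpart2, ZPpart3⟩
end

section
/- Let X, Y be metric spaces, E ⊆ X × Y (with the maximum metric), and let A ⊆ X be a set such that the section E_x is nonempty for every x ∈ A. Then: (i) updim E ≥ updim A + inf_{x∈A} dpdim E_x; (ii) lpdim E ≥ lpdim A + inf_{x∈A} lpdim E_x; (iii) dpdim E ≥ dpdim A + inf_{x∈A} dpdim E_x. -/
open Filter MeasureTheory Set
open scoped ENNReal NNReal Topology

open Filter MeasureTheory Set ZPaper
open scoped ENNReal NNReal Topology

namespace ZP

variable {X : Type*} [MetricSpace X] {Y : Type*} [MetricSpace Y]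

lemma le_capacity {δ : ℝ} {E : Set X} (F : Finset X)
    (hF : ↑F ⊆ E) (hsep : ∀ x ∈ F, ∀ y ∈ F, x ≠ y → δ < dist x y) :
    (F.card : ℝ≥0∞) ≤ capacity δ E :=
  le_iSup_of_le F (le_iSup_of_le ⟨hF, hsep⟩ le_rfl)

lemma capacity_le {δ : ℝ} {E : Set X} {c : ℝ≥0∞}
    (h : ∀ F : Finset X, ↑F ⊆ E → (∀ x ∈ F, ∀ y ∈ F, x ≠ y → δ < dist x y) →
      (F.card : ℝ≥0∞) ≤ c) :
    capacity δ E ≤ c :=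
  iSup_le fun F => iSup_le fun hF => h F hF.1 hF.2

lemma capacity_mono {δ : ℝ} {E E' : Set X} (h : E ⊆ E') : capacity δ E ≤ capacity δ E' :=
  capacity_le fun F hF hs => le_capacity F (hF.trans h) hs

lemma capacity_empty {δ : ℝ} : capacity δ (∅ : Set X) = 0 := by
  refine le_antisymm (capacity_le fun F hF _ => ?_) zero_le
  have : F = ∅ := by
    rw [← Finset.coe_eq_empty]
    exact Set.subset_empty_iff.1 hF
  simp [this]

lemma capacity_union_le {δ : ℝ} (S T : Set X) :
    capacity δ (S ∪ T) ≤ capacity δ S + capacity δ T := by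
  classical
  refine capacity_le fun F hF hs => ?_
  have h1 : ((F.filter (· ∈ S)).card : ℝ≥0∞) ≤ capacity δ S := by
    refine le_capacity _ ?_ fun x hx y hy hxy =>
      hs x (Finset.filter_subset _ _ hx) y (Finset.filter_subset _ _ hy) hxy
    intro x hx
    simp only [Finset.coe_filter, Set.mem_setOf_eq] at hx
    exact hx.2
  have h2 : ((F.filter (fun x => x ∉ S)).card : ℝ≥0∞) ≤ capacity δ T := by
    refine le_capacity _ ?_ fun x hx y hy hxy =>
      hs x (Finset.filter_subset _ _ hx) y (Finset.filter_subset _ _ hy) hxy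
    intro x hx
    simp only [Finset.coe_filter, Set.mem_setOf_eq] at hx
    rcases hF (Finset.mem_coe.2 hx.1) with h | h
    · exact absurd h hx.2
    · exact h
  calc (F.card : ℝ≥0∞)
      = ((F.filter (· ∈ S)).card : ℝ≥0∞) + ((F.filter (fun x => x ∉ S)).card : ℝ≥0∞) := by
        rw [← Nat.cast_add, Finset.card_filter_add_card_filter_not]
    _ ≤ capacity δ S + capacity δ T := add_le_add h1 h2

lemma capacity_biUnion_le {δ : ℝ} {ι : Type*} [DecidableEq ι] (s : Finset ι) (T : ι → Set X) :
    capacity δ (⋃ i ∈ s, T i) ≤ ∑ i ∈ s, capacity δ (T i) := by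
  induction s using Finset.induction with
  | empty => simp [capacity_empty]
  | insert _ _ hnotmem ih =>
    rename_i j s'
    rw [Finset.set_biUnion_insert, Finset.sum_insert hnotmem]
    exact le_trans (capacity_union_le _ _) (add_le_add le_rfl ih)

lemma capacity_prod {δ : ℝ} {S : Set (X × Y)} {A : Set X} {c : ℝ≥0∞}
    (h : ∀ x ∈ A, c ≤ capacity δ (sect S x)) :
    capacity δ A * c ≤ capacity δ S := by
  classical
  rw [capacity, ENNReal.iSup_mul]
  refine iSup_le fun F => ?_
  rw [ENNReal.iSup_mul]
  refine iSup_le fun hF => ?_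
  rcases F.eq_empty_or_nonempty with rfl | hne
  · simp
  have hcard : (F.card : ℝ≥0∞) ≠ 0 := by
    simpa using hne.card_ne_zero
  rw [mul_comm, ← ENNReal.le_div_iff_mul_le (Or.inl hcard) (Or.inl (ENNReal.natCast_ne_top _))]
  refine le_of_forall_lt_imp_le_of_dense fun d hd => ?_
  rw [ENNReal.le_div_iff_mul_le (Or.inl hcard) (Or.inl (ENNReal.natCast_ne_top _))]
  have hG : ∀ x ∈ F, ∃ G : Finset Y,
      ((↑G ⊆ sect S x ∧ ∀ u ∈ G, ∀ v ∈ G, u ≠ v → δ < dist u v) ∧ d ≤ (G.card : ℝ≥0∞)) := by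
    intro x hx
    have hlt : d < capacity δ (sect S x) := lt_of_lt_of_le hd (h x (hF.1 hx))
    rw [capacity, lt_iSup_iff] at hlt
    obtain ⟨G, hG⟩ := hlt
    rw [lt_iSup_iff] at hG
    obtain ⟨hGc, hGlt⟩ := hG
    exact ⟨G, hGc, hGlt.le⟩
  choose! g hg hgd using hG
  set H : Finset (X × Y) := F.biUnion (fun x => (g x).image fun y => (x, y)) with hH
  have hmemH : ∀ p : X × Y, p ∈ H ↔ ∃ x ∈ F, ∃ y ∈ g x, (x, y) = p := by
    intro p
    simp [hH]
  have hHsub : ↑H ⊆ S := by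
    intro p hp
    obtain ⟨x, hx, y, hy, rfl⟩ := (hmemH p).1 (Finset.mem_coe.1 hp)
    exact (hg x hx).1 (Finset.mem_coe.2 hy)
  have hHsep : ∀ p ∈ H, ∀ q ∈ H, p ≠ q → δ < dist p q := by
    intro p hp q hq hpq
    obtain ⟨x, hx, y, hy, rfl⟩ := (hmemH p).1 hp
    obtain ⟨x', hx', y', hy', rfl⟩ := (hmemH q).1 hq
    rw [Prod.dist_eq]
    rcases eq_or_ne x x' with rfl | hxx
    · have hyy : y ≠ y' := by
        intro hcon; exact hpq (by rw [hcon])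
      exact lt_of_lt_of_le ((hg x hx).2 y hy y' hy' hyy) (le_max_right _ _)
    · exact lt_of_lt_of_le (hF.2 x hx x' hx' hxx) (le_max_left _ _)
  have hcardH : (H.card : ℝ≥0∞) ≤ capacity δ S := le_capacity H hHsub hHsep
  refine le_trans ?_ hcardH
  have hdisj : ∀ x ∈ F, ∀ x' ∈ F, x ≠ x' →
      Disjoint ((g x).image fun y => (x, y)) ((g x').image fun y => (x', y)) := by
    intro x _ x' _ hxx
    rw [Finset.disjoint_left]
    rintro p hp hp'
    simp only [Finset.mem_image] at hp hp'
    obtain ⟨y, _, rfl⟩ := hp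
    obtain ⟨y', _, h'⟩ := hp'
    exact hxx (congrArg Prod.fst h').symm
  have hcardeq : H.card = ∑ x ∈ F, ((g x).image fun y => (x, y)).card :=
    Finset.card_biUnion hdisj
  have himg : ∀ x, ((g x).image fun y => (x, y)).card = (g x).card := fun x =>
    Finset.card_image_of_injective _ (fun u v huv => (Prod.mk.injEq _ _ _ _ ▸ huv).2)
  calc d * (F.card : ℝ≥0∞) = ∑ _x ∈ F, d := by
        rw [Finset.sum_const, nsmul_eq_mul, mul_comm]
    _ ≤ ∑ x ∈ F, ((g x).card : ℝ≥0∞) := Finset.sum_le_sum fun x hx => hgd x hx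
    _ = (H.card : ℝ≥0∞) := by
        rw [hcardeq, Nat.cast_sum]
        exact Finset.sum_congr rfl fun x _ => by rw [himg]

end ZP
namespace ZP

variable {X : Type*} [MetricSpace X] {Y : Type*} [MetricSpace Y]

lemma hev01 : ∀ᶠ δ in 𝓝[>] (0:ℝ), δ ∈ Set.Ioo (0:ℝ) 1 :=
  Ioo_mem_nhdsGT_of_mem ⟨le_refl (0:ℝ), one_pos⟩

lemma ratio_le_iff {δ : ℝ} (h0 : 0 < δ) (h1 : δ < 1) {s : ℝ} {C : ℝ≥0∞} :
    (s : EReal) ≤ C.log / ((|Real.log δ| : ℝ) : EReal) ↔ ENNReal.ofReal (δ ^ (-s)) ≤ C := by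
  have hlog : Real.log δ < 0 := Real.log_neg h0 h1
  have hL : (0:ℝ) < |Real.log δ| := abs_pos.2 hlog.ne
  rw [EReal.le_div_iff_mul_le (by exact_mod_cast hL) (by simp), ← EReal.coe_mul]
  have hs : s * |Real.log δ| = Real.log (δ ^ (-s)) := by
    rw [Real.log_rpow h0, abs_of_neg hlog]; ring
  rw [hs, ← ENNReal.log_ofReal_of_pos (Real.rpow_pos_of_pos h0 _), ENNReal.log_le_log_iff]

lemma le_ubdim_of_frequently {S : Set X} {s : ℝ}
    (h : ∃ᶠ δ in 𝓝[>] (0:ℝ), δ < 1 ∧ ENNReal.ofReal (δ ^ (-s)) ≤ capacity δ S) :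
    (s : EReal) ≤ ubdim S := by
  refine le_limsup_of_frequently_le ?_
  refine (h.and_eventually eventually_mem_nhdsWithin).mono ?_
  rintro δ ⟨⟨h1, hc⟩, h0⟩
  exact (ratio_le_iff h0 h1).2 hc

lemma le_lbdim_of_eventually {S : Set X} {s : ℝ}
    (h : ∀ᶠ δ in 𝓝[>] (0:ℝ), ENNReal.ofReal (δ ^ (-s)) ≤ capacity δ S) :
    (s : EReal) ≤ lbdim S := by
  refine le_liminf_of_le (by isBoundedDefault) ?_
  refine (h.and hev01).mono ?_
  rintro δ ⟨hc, h0, h1⟩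
  exact (ratio_le_iff h0 h1).2 hc

lemma frequently_of_lt_ubdim {S : Set X} {a : ℝ} (h : (a : EReal) < ubdim S) :
    ∃ᶠ δ in 𝓝[>] (0:ℝ), δ < 1 ∧ ENNReal.ofReal (δ ^ (-a)) ≤ capacity δ S := by
  have h1 := Filter.frequently_lt_of_lt_limsup (by isBoundedDefault) h
  refine (h1.and_eventually hev01).mono ?_
  rintro δ ⟨hlt, h0, hδ1⟩
  exact ⟨hδ1, (ratio_le_iff h0 hδ1).1 hlt.le⟩

lemma eventually_of_lt_lbdim {S : Set X} {b : ℝ} (h : (b : EReal) < lbdim S) :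
    ∀ᶠ δ in 𝓝[>] (0:ℝ), ENNReal.ofReal (δ ^ (-b)) ≤ capacity δ S := by
  have h1 := Filter.eventually_lt_of_lt_liminf h
  refine (h1.and hev01).mono ?_
  rintro δ ⟨hlt, h0, hδ1⟩
  exact (ratio_le_iff h0 hδ1).1 hlt.le

lemma lbdim_mono {S T : Set X} (h : S ⊆ T) : lbdim S ≤ lbdim T :=
  Filter.liminf_le_liminf (Filter.Eventually.of_forall fun δ =>
    EReal.div_le_div_right_of_nonneg (by exact_mod_cast abs_nonneg (Real.log δ))
      (ENNReal.log_le_log_iff.2 (capacity_mono h)))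

end ZP
namespace ZP

variable {X : Type*} [MetricSpace X] {Y : Type*} [MetricSpace Y]

lemma exists_m {b : ℝ} {D : Set Y} (h : (b:EReal) < lbdim D) :
    ∃ m : ℕ, ∀ δ : ℝ, δ ∈ Set.Ioo (0:ℝ) (1/(m+1)) →
      ENNReal.ofReal (δ ^ (-b)) ≤ capacity δ D := by
  have hev := eventually_of_lt_lbdim h
  rw [(nhdsGT_basis (0:ℝ)).eventually_iff] at hev
  obtain ⟨ε, hε, hevε⟩ := hev
  obtain ⟨m, hm⟩ := exists_nat_one_div_lt hε
  exact ⟨m, fun δ hδ => hevε ⟨hδ.1, hδ.2.trans hm⟩⟩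

lemma core_lb {C T : Set (X × Y)} {A' : Set X} {a b : ℝ} {m : ℕ}
    (hTC : T ⊆ C)
    (hsec : ∀ x ∈ A', ∀ δ : ℝ, δ ∈ Set.Ioo (0:ℝ) (1/(m+1)) →
      ENNReal.ofReal (δ ^ (-b)) ≤ capacity δ (sect T x))
    (ha : (a:EReal) < lbdim A') : ((a + b : ℝ) : EReal) ≤ lbdim C := by
  have hev1 := eventually_of_lt_lbdim ha
  have hevm : ∀ᶠ δ in 𝓝[>](0:ℝ), δ ∈ Set.Ioo (0:ℝ) (1/(m+1)) :=
    Ioo_mem_nhdsGT_of_mem ⟨le_refl _, by positivity⟩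
  refine le_lbdim_of_eventually ?_
  filter_upwards [hev1, hevm, eventually_mem_nhdsWithin] with δ hcap hδm h0
  have h0' : (0:ℝ) < δ := h0
  calc ENNReal.ofReal (δ ^ (-(a+b)))
      = ENNReal.ofReal (δ^(-a)) * ENNReal.ofReal (δ^(-b)) := by
        rw [neg_add, Real.rpow_add h0',
          ENNReal.ofReal_mul (Real.rpow_nonneg h0'.le _)]
    _ ≤ capacity δ A' * ENNReal.ofReal (δ^(-b)) := mul_le_mul_left hcap _
    _ ≤ capacity δ T := capacity_prod (fun x hx => hsec x hx δ hδm)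
    _ ≤ capacity δ C := capacity_mono hTC

lemma main_lp (E : Set (X × Y)) (A : Set X) (a b : ℝ)
    (hb : ∀ x ∈ A, (b:EReal) < lpdim (sect E x)) (ha : (a:EReal) < lpdim A) :
    ((a + b : ℝ) : EReal) ≤ lpdim E := by
  classical
  refine le_iInf fun C => le_iInf fun hC => ?_
  set T : ℕ → Set (X × Y) := fun n => E ∩ C n with hT
  set Am : ℕ → ℕ → Set X := fun n m =>
    {x ∈ A | ∀ δ : ℝ, δ ∈ Set.Ioo (0:ℝ) (1/(m+1)) →
      ENNReal.ofReal (δ ^ (-b)) ≤ capacity δ (sect (T n) x)} with hAm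
  have hcov : A ⊆ ⋃ j : ℕ, Am j.unpair.1 j.unpair.2 := by
    intro x hx
    have hsecov : sect E x ⊆ ⋃ n, sect (T n) x := by
      intro y hy
      have hy' : (x, y) ∈ E := hy
      obtain ⟨n, hn⟩ := Set.mem_iUnion.1 (hC hy')
      exact Set.mem_iUnion.2 ⟨n, ⟨hy', hn⟩⟩
    have hle : lpdim (sect E x) ≤ ⨆ n, lbdim (sect (T n) x) :=
      iInf₂_le (fun n => sect (T n) x) hsecov
    obtain ⟨n, hn⟩ := lt_iSup_iff.1 ((hb x hx).trans_le hle)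
    obtain ⟨m, hm⟩ := exists_m hn
    refine Set.mem_iUnion.2 ⟨Nat.pair n m, ?_⟩
    simp only [Nat.unpair_pair]
    exact ⟨hx, hm⟩
  obtain ⟨j, hj⟩ := lt_iSup_iff.1 (ha.trans_le (iInf₂_le (fun j : ℕ => Am j.unpair.1 j.unpair.2) hcov))
  exact le_trans
    (core_lb Set.inter_subset_right (fun x hx => hx.2) hj) (le_iSup (fun n => lbdim (C n)) j.unpair.1)

lemma main_dp (E : Set (X × Y)) (A : Set X) (a b : ℝ)
    (hb : ∀ x ∈ A, (b:EReal) < dpdim (sect E x)) (ha : (a:EReal) < dpdim A) :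
    ((a + b : ℝ) : EReal) ≤ dpdim E := by
  classical
  refine le_iInf fun C => le_iInf fun hC => ?_
  obtain ⟨hCmono, hCun⟩ := hC
  set T : ℕ → Set (X × Y) := fun n => E ∩ C n with hT
  have hTmono : Monotone T := fun n k h => Set.inter_subset_inter_right _ (hCmono h)
  set Am : ℕ → ℕ → Set X := fun n m =>
    {x ∈ A | ∀ δ : ℝ, δ ∈ Set.Ioo (0:ℝ) (1/(m+1)) →
      ENNReal.ofReal (δ ^ (-b)) ≤ capacity δ (sect (T n) x)} with hAm
  have hAm_mono : ∀ n m n' m', n ≤ n' → m ≤ m' → Am n m ⊆ Am n' m' := by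
    intro n m n' m' hn hm x hx
    refine ⟨hx.1, fun δ hδ => ?_⟩
    have h1 : (1:ℝ)/(m'+1) ≤ 1/(m+1) := by
      apply one_div_le_one_div_of_le (by positivity)
      exact add_le_add_left (by exact_mod_cast hm) 1
    exact (hx.2 δ ⟨hδ.1, lt_of_lt_of_le hδ.2 h1⟩).trans
      (capacity_mono (fun y hy => hTmono hn hy))
  have hcov : ∀ x ∈ A, ∃ n m, x ∈ Am n m := by
    intro x hx
    have hsmono : Monotone fun n => sect (T n) x := fun n k h y hy => hTmono h hy
    have hsun : (⋃ n, sect (T n) x) = sect E x := by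
      apply subset_antisymm (Set.iUnion_subset fun n y hy => hy.1)
      intro y hy
      have hy' : (x, y) ∈ ⋃ n, C n := by rw [hCun]; exact hy
      obtain ⟨n, hn⟩ := Set.mem_iUnion.1 hy'
      exact Set.mem_iUnion.2 ⟨n, ⟨hy, hn⟩⟩
    have hle : dpdim (sect E x) ≤ ⨆ n, lbdim (sect (T n) x) :=
      iInf₂_le (fun n => sect (T n) x) ⟨hsmono, hsun⟩
    obtain ⟨n, hn⟩ := lt_iSup_iff.1 ((hb x hx).trans_le hle)
    obtain ⟨m, hm⟩ := exists_m hn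
    exact ⟨n, m, hx, hm⟩
  have hdiag_mono : Monotone fun j => Am j j := fun j k h => hAm_mono j j k k h h
  have hdiag_un : (⋃ j, Am j j) = A := by
    apply subset_antisymm (Set.iUnion_subset fun j x hx => hx.1)
    intro x hx
    obtain ⟨n, m, hnm⟩ := hcov x hx
    exact Set.mem_iUnion.2 ⟨max n m,
      hAm_mono n m (max n m) (max n m) (le_max_left _ _) (le_max_right _ _) hnm⟩
  obtain ⟨j, hj⟩ := lt_iSup_iff.1 (ha.trans_le (iInf₂_le (fun j => Am j j) ⟨hdiag_mono, hdiag_un⟩))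
  exact le_trans
    (core_lb Set.inter_subset_right (fun x hx => hx.2) hj) (le_iSup (fun n => lbdim (C n)) j)

end ZP
namespace ZP

variable {X : Type*} [MetricSpace X] {Y : Type*} [MetricSpace Y]

lemma main_ub (E : Set (X × Y)) (A : Set X) (a b : ℝ)
    (hb : ∀ x ∈ A, (b:EReal) < dpdim (sect E x)) (ha : (a:EReal) < updim A) :
    ((a + b : ℝ) : EReal) ≤ updim E := by
  classical
  refine le_iInf fun C => le_iInf fun hC => ?_
  set T : ℕ → Set (X × Y) := fun k => E ∩ ⋃ i ∈ Finset.range (k+1), C i with hT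
  have hTmono : Monotone T := by
    intro n k h
    refine Set.inter_subset_inter_right _ (Set.iUnion₂_subset fun i hi => ?_)
    refine Set.subset_iUnion₂ (s := fun i (_ : i ∈ Finset.range (k+1)) => C i) i ?_
    exact Finset.mem_range.2 (lt_of_lt_of_le (Finset.mem_range.1 hi) (by omega))
  set Am : ℕ → ℕ → Set X := fun n m =>
    {x ∈ A | ∀ δ : ℝ, δ ∈ Set.Ioo (0:ℝ) (1/(m+1)) →
      ENNReal.ofReal (δ ^ (-b)) ≤ capacity δ (sect (T n) x)} with hAm
  have hcov : A ⊆ ⋃ j : ℕ, Am j.unpair.1 j.unpair.2 := by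
    intro x hx
    have hsmono : Monotone fun n => sect (T n) x := fun n k h y hy => hTmono h hy
    have hsun : (⋃ n, sect (T n) x) = sect E x := by
      apply subset_antisymm (Set.iUnion_subset fun n y hy => hy.1)
      intro y hy
      have hy' : (x, y) ∈ E := hy
      obtain ⟨n, hn⟩ := Set.mem_iUnion.1 (hC hy')
      refine Set.mem_iUnion.2 ⟨n, ⟨hy', ?_⟩⟩
      exact Set.mem_iUnion₂.2 ⟨n, Finset.self_mem_range_succ n, hn⟩
    have hle : dpdim (sect E x) ≤ ⨆ n, lbdim (sect (T n) x) :=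
      iInf₂_le (fun n => sect (T n) x) ⟨hsmono, hsun⟩
    obtain ⟨n, hn⟩ := lt_iSup_iff.1 ((hb x hx).trans_le hle)
    obtain ⟨m, hm⟩ := exists_m hn
    refine Set.mem_iUnion.2 ⟨Nat.pair n m, ?_⟩
    simp only [Nat.unpair_pair]
    exact ⟨hx, hm⟩
  obtain ⟨j, hj⟩ := lt_iSup_iff.1
    (ha.trans_le (iInf₂_le (fun j : ℕ => Am j.unpair.1 j.unpair.2) hcov))
  set n := j.unpair.1 with hn
  set m := j.unpair.2 with hm
  -- find a real a' strictly between a and ubdim (Am n m)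
  obtain ⟨z, hz1, hz2⟩ := exists_between hj
  have hzt : z ≠ ⊤ := ne_top_of_lt hz2
  have hzb : z ≠ ⊥ := ne_bot_of_gt hz1
  set a' : ℝ := z.toReal with ha'
  have hza' : (a' : EReal) = z := EReal.coe_toReal hzt hzb
  have ha'1 : a < a' := by exact_mod_cast hza' ▸ hz1
  have ha'2 : (a' : EReal) < ubdim (Am n m) := hza' ▸ hz2
  -- frequently, the capacity of Am n m is large
  have hfreq := frequently_of_lt_ubdim ha'2
  -- eventually, δ is small enough
  have htend : Tendsto (fun δ : ℝ => δ ^ (-(a'-a))) (𝓝[>](0:ℝ)) atTop := by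
    have h1 : Tendsto (fun x : ℝ => x ^ (a'-a)) atTop atTop :=
      tendsto_rpow_atTop (by linarith)
    refine (h1.comp tendsto_inv_nhdsGT_zero).congr' ?_
    filter_upwards [eventually_mem_nhdsWithin] with δ hδ
    have h0 : (0:ℝ) < δ := hδ
    simp only [Function.comp_apply]
    rw [Real.inv_rpow h0.le, ← Real.rpow_neg h0.le]
  have hsmall : ∀ᶠ δ in 𝓝[>](0:ℝ), δ ∈ Set.Ioo (0:ℝ) (1/(m+1)) ∧
      ((n+1 : ℕ) : ℝ≥0∞) * ENNReal.ofReal (δ ^ (-(a+b))) ≤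
        ENNReal.ofReal (δ ^ (-(a'+b))) := by
    have hIoo : ∀ᶠ δ in 𝓝[>](0:ℝ), δ ∈ Set.Ioo (0:ℝ) (1/(m+1)) :=
      Ioo_mem_nhdsGT_of_mem ⟨le_refl _, by positivity⟩
    filter_upwards [hIoo, htend.eventually_ge_atTop ((n:ℝ)+1),
      eventually_mem_nhdsWithin] with δ hδm hge h0'
    have h0 : (0:ℝ) < δ := h0'
    refine ⟨hδm, ?_⟩
    have key : ((n:ℝ)+1) * δ ^ (-(a+b)) ≤ δ ^ (-(a'+b)) := by
      rw [show -(a'+b) = -(a'-a) + -(a+b) by ring, Real.rpow_add h0]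
      exact mul_le_mul_of_nonneg_right hge (Real.rpow_nonneg h0.le _)
    calc ((n+1 : ℕ) : ℝ≥0∞) * ENNReal.ofReal (δ ^ (-(a+b)))
        = ENNReal.ofReal (((n:ℝ)+1) * δ ^ (-(a+b))) := by
          rw [ENNReal.ofReal_mul (by positivity)]
          congr 1
          rw [show ((n:ℝ)+1) = ((n+1:ℕ):ℝ) by push_cast; ring, ENNReal.ofReal_natCast]
      _ ≤ ENNReal.ofReal (δ ^ (-(a'+b))) := ENNReal.ofReal_le_ofReal key
  have hkey : ∃ᶠ δ in 𝓝[>](0:ℝ), δ < 1 ∧ ∃ i ∈ Finset.range (n+1),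
      ENNReal.ofReal (δ ^ (-(a+b))) ≤ capacity δ (C i) := by
    refine ((hfreq.and_eventually hsmall).and_eventually eventually_mem_nhdsWithin).mono ?_
    rintro δ ⟨⟨⟨hδ1, hcap⟩, hδm, hns⟩, h0'⟩
    have h0 : (0:ℝ) < δ := h0'
    have c1 : ENNReal.ofReal (δ ^ (-(a'+b))) ≤ capacity δ (T n) := by
      calc ENNReal.ofReal (δ ^ (-(a'+b)))
          = ENNReal.ofReal (δ^(-a')) * ENNReal.ofReal (δ^(-b)) := by
            rw [neg_add, Real.rpow_add h0,
              ENNReal.ofReal_mul (Real.rpow_nonneg h0.le _)]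
        _ ≤ capacity δ (Am n m) * ENNReal.ofReal (δ^(-b)) := mul_le_mul_left hcap _
        _ ≤ capacity δ (T n) := capacity_prod (fun x hx => hx.2 δ hδm)
    have c2 : capacity δ (T n) ≤ ∑ i ∈ Finset.range (n+1), capacity δ (C i) :=
      le_trans (capacity_mono Set.inter_subset_right)
        (capacity_biUnion_le (Finset.range (n+1)) C)
    have hsum : ((n+1 : ℕ) : ℝ≥0∞) * ENNReal.ofReal (δ ^ (-(a+b))) ≤
        ∑ i ∈ Finset.range (n+1), capacity δ (C i) := hns.trans (c1.trans c2)
    refine ⟨hδ1, ?_⟩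
    by_contra hcon
    push_neg at hcon
    have hlt : ∑ i ∈ Finset.range (n+1), capacity δ (C i) <
        ∑ _i ∈ Finset.range (n+1), ENNReal.ofReal (δ ^ (-(a+b))) :=
      ENNReal.sum_lt_sum_of_nonempty (Finset.nonempty_range_iff.2 (by omega : n+1 ≠ 0)) hcon
    rw [Finset.sum_const, Finset.card_range, nsmul_eq_mul] at hlt
    exact (hsum.trans_lt hlt).false
  have hpick : ∃ i ∈ Finset.range (n+1), ∃ᶠ δ in 𝓝[>](0:ℝ),
      δ < 1 ∧ ENNReal.ofReal (δ ^ (-(a+b))) ≤ capacity δ (C i) := by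
    by_contra hcon
    push_neg at hcon
    have hev : ∀ᶠ δ in 𝓝[>](0:ℝ), ∀ i ∈ Finset.range (n+1),
        ¬(δ < 1 ∧ ENNReal.ofReal (δ ^ (-(a+b))) ≤ capacity δ (C i)) := by
      rw [Filter.eventually_all_finset]
      intro i hi
      exact (hcon i hi).mono fun δ hδ ⟨h1, hle⟩ => (hle.trans_lt (hδ h1)).false
    obtain ⟨δ, ⟨hδ1, i, hi, hle⟩, hall⟩ := (hkey.and_eventually hev).exists
    exact hall i hi ⟨hδ1, hle⟩
  obtain ⟨i, _, hfr⟩ := hpick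
  exact le_trans (le_ubdim_of_frequently hfr) (le_iSup (fun k => ubdim (C k)) i)

end ZP
/-- Theorem `dim:sections`. Let `E ⊆ X × Y` and `A ⊆ X` with all
sections `E_x`, `x ∈ A`, nonempty. Then
(i) `updim E ≥ updim A + inf_{x∈A} dpdim E_x`;
(ii) `lpdim E ≥ lpdim A + inf_{x∈A} lpdim E_x`;
(iii) `dpdim E ≥ dpdim A + inf_{x∈A} dpdim E_x`. -/
theorem stmt3 {X Y : Type*} [MetricSpace X] [MetricSpace Y] (E : Set (X × Y)) (A : Set X)
    (hA : ∀ x ∈ A, (sect E x).Nonempty) :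
    (updim E ≥ updim A + ⨅ x ∈ A, dpdim (sect E x)) ∧
    (lpdim E ≥ lpdim A + ⨅ x ∈ A, lpdim (sect E x)) ∧
    (dpdim E ≥ dpdim A + ⨅ x ∈ A, dpdim (sect E x)) := by
  refine ⟨?_, ?_, ?_⟩
  · rw [ge_iff_le]
    refine EReal.add_le_of_forall_lt fun a' ha' b' hb' => ?_
    induction a' using EReal.rec with
    | bot => rw [EReal.bot_add]; exact bot_le
    | top => exact absurd ha' not_top_lt
    | coe a =>
      induction b' using EReal.rec with
      | bot => rw [EReal.add_bot]; exact bot_le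
      | top => exact absurd hb' not_top_lt
      | coe b =>
        rw [← EReal.coe_add]
        exact ZP.main_ub E A a b (fun x hx => hb'.trans_le (iInf₂_le x hx)) ha'
  · rw [ge_iff_le]
    refine EReal.add_le_of_forall_lt fun a' ha' b' hb' => ?_
    induction a' using EReal.rec with
    | bot => rw [EReal.bot_add]; exact bot_le
    | top => exact absurd ha' not_top_lt
    | coe a =>
      induction b' using EReal.rec with
      | bot => rw [EReal.add_bot]; exact bot_le
      | top => exact absurd hb' not_top_lt
      | coe b =>
        rw [← EReal.coe_add]
        exact ZP.main_lp E A a b (fun x hx => hb'.trans_le (iInf₂_le x hx)) ha'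
  · rw [ge_iff_le]
    refine EReal.add_le_of_forall_lt fun a' ha' b' hb' => ?_
    induction a' using EReal.rec with
    | bot => rw [EReal.bot_add]; exact bot_le
    | top => exact absurd ha' not_top_lt
    | coe a =>
      induction b' using EReal.rec with
      | bot => rw [EReal.add_bot]; exact bot_le
      | top => exact absurd hb' not_top_lt
      | coe b =>
        rw [← EReal.coe_add]
        exact ZP.main_dp E A a b (fun x hx => hb'.trans_le (iInf₂_le x hx)) ha'
end

section
/- Let X, Y be metric spaces, g, h Hausdorff functions and Δ a scale. For any set E ⊆ X × Y, pack^{gh}_{Δ,0}(E) ≥ ∫* lboxm^g_0(E_x) d pack^h_Δ(x). -/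
open Filter MeasureTheory Set
open scoped ENNReal NNReal Topology

open Filter MeasureTheory Set ZPaper
open scoped ENNReal NNReal Topology

namespace ZProof
open ZPaper

variable {X : Type*} [MetricSpace X] {Y : Type*} [MetricSpace Y]

lemma isScaledPacking_subset {Δ : Set ℝ} {δ : ℝ} {π π' : Set (X × ℝ)} {S : Set X}
    (h : IsScaledPacking Δ δ π S) (hsub : π' ⊆ π) : IsScaledPacking Δ δ π' S :=
  ⟨⟨⟨fun p hp => h.1.1.1 p (hsub hp), fun p hp q hq hpq => h.1.1.2 p (hsub hp) q (hsub hq) hpq⟩,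
    fun p hp => h.1.2 p (hsub hp)⟩, fun p hp => h.2 p (hsub hp)⟩

lemma isScaledPacking_mono_set {Δ : Set ℝ} {δ : ℝ} {π : Set (X × ℝ)} {S S' : Set X}
    (h : IsScaledPacking Δ δ π S) (hS : S ⊆ S') : IsScaledPacking Δ δ π S' :=
  ⟨⟨h.1.1, fun p hp => hS (h.1.2 p hp)⟩, h.2⟩

lemma isScaledPacking_mono_delta {Δ : Set ℝ} {δ δ' : ℝ} {π : Set (X × ℝ)} {S : Set X}
    (h : IsScaledPacking Δ δ π S) (hd : δ ≤ δ') : IsScaledPacking Δ δ' π S :=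
  ⟨h.1, fun p hp => ⟨(h.2 p hp).1, (h.2 p hp).2.trans hd⟩⟩

/-- weighted finite packing pre-measure -/
noncomputable def wpre (W : X → ℝ≥0∞) (h : ℝ → ℝ) (Δ : Set ℝ) (δ : ℝ) (S : Set X) : ℝ≥0∞ :=
  ⨆ (π : Finset (X × ℝ)) (_ : IsScaledPacking Δ δ (↑π : Set (X × ℝ)) S),
    ∑ p ∈ π, W p.1 * ENNReal.ofReal (h p.2)

noncomputable def wpre0 (W : X → ℝ≥0∞) (h : ℝ → ℝ) (Δ : Set ℝ) (S : Set X) : ℝ≥0∞ :=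
  ⨅ (δ : ℝ) (_ : 0 < δ), wpre W h Δ δ S

lemma sum_le_packPre {g : ℝ → ℝ} {Δ : Set ℝ} {δ : ℝ} {S : Set X} (π : Finset (X × ℝ))
    (hπ : IsScaledPacking Δ δ (↑π : Set (X × ℝ)) S) :
    ∑ p ∈ π, ENNReal.ofReal (g p.2) ≤ packPre g Δ δ S := by
  have h1 : packVal g (↑π : Set (X × ℝ)) = ∑ p ∈ π, ENNReal.ofReal (g p.2) := by
    rw [packVal]
    exact Finset.tsum_subtype π (fun p => ENNReal.ofReal (g p.2))
  rw [← h1, packPre]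
  exact le_iSup₂ (f := fun π _ => packVal g π) (↑π : Set (X × ℝ)) hπ

lemma packPre_eq_wpre (g : ℝ → ℝ) (Δ : Set ℝ) (δ : ℝ) (S : Set X) :
    packPre g Δ δ S = wpre (fun _ => 1) g Δ δ S := by
  simp only [wpre, one_mul]
  apply le_antisymm
  · rw [packPre]
    refine iSup₂_le fun π hπ => ?_
    rw [packVal, ENNReal.tsum_eq_iSup_sum]
    refine iSup_le fun s => ?_
    classical
    have : ∑ p ∈ s, ENNReal.ofReal (g (p : X × ℝ).2)
        = ∑ p ∈ s.image Subtype.val, ENNReal.ofReal (g p.2) := by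
      rw [Finset.sum_image (fun a _ b _ hab => Subtype.val_injective hab)]
    rw [this]
    refine le_iSup₂ (f := fun (π : Finset (X × ℝ))
      (_ : IsScaledPacking Δ δ (↑π : Set (X × ℝ)) S) => ∑ p ∈ π, ENNReal.ofReal (g p.2))
      (s.image Subtype.val) ?_
    refine isScaledPacking_subset hπ ?_
    intro p hp
    simp only [Finset.coe_image, Set.mem_image] at hp
    obtain ⟨q, _, rfl⟩ := hp
    exact q.2
  · exact iSup₂_le fun π hπ => sum_le_packPre π hπ

lemma packPre0_eq_wpre0 (g : ℝ → ℝ) (Δ : Set ℝ) (S : Set X) :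
    packPre0 g Δ S = wpre0 (fun _ => 1) g Δ S := by
  simp only [packPre0, wpre0, packPre_eq_wpre]

lemma wpre_mono_delta (W : X → ℝ≥0∞) (h : ℝ → ℝ) (Δ : Set ℝ) {δ δ' : ℝ} (hd : δ ≤ δ')
    (S : Set X) : wpre W h Δ δ S ≤ wpre W h Δ δ' S :=
  iSup₂_le fun π hπ => le_iSup₂_of_le π (isScaledPacking_mono_delta hπ hd) le_rfl

lemma wpre_mono_set (W : X → ℝ≥0∞) (h : ℝ → ℝ) (Δ : Set ℝ) (δ : ℝ) {S S' : Set X}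
    (hS : S ⊆ S') : wpre W h Δ δ S ≤ wpre W h Δ δ S' :=
  iSup₂_le fun π hπ => le_iSup₂_of_le π (isScaledPacking_mono_set hπ hS) le_rfl

lemma wpre0_mono_set (W : X → ℝ≥0∞) (h : ℝ → ℝ) (Δ : Set ℝ) {S S' : Set X}
    (hS : S ⊆ S') : wpre0 W h Δ S ≤ wpre0 W h Δ S' :=
  iInf₂_mono fun δ _ => wpre_mono_set W h Δ δ hS

lemma wpre0_le (W : X → ℝ≥0∞) (h : ℝ → ℝ) (Δ : Set ℝ) {δ : ℝ} (hδ : 0 < δ) (S : Set X) :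
    wpre0 W h Δ S ≤ wpre W h Δ δ S := iInf₂_le δ hδ

lemma wpre0_empty (W : X → ℝ≥0∞) (h : ℝ → ℝ) (Δ : Set ℝ) : wpre0 W h Δ (∅ : Set X) = 0 := by
  refine le_antisymm (le_trans (wpre0_le W h Δ one_pos ∅) ?_) zero_le
  refine iSup₂_le fun π hπ => ?_
  have : π = ∅ := by
    by_contra hne
    obtain ⟨p, hp⟩ := Finset.nonempty_iff_ne_empty.2 hne
    exact absurd (hπ.1.2 p hp) (Set.notMem_empty _)
  simp [this]

end ZProof

namespace ZProof
open ZPaper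

variable {X : Type*} [MetricSpace X] {Y : Type*} [MetricSpace Y]

lemma isScaledPacking_empty (Δ : Set ℝ) (δ : ℝ) (S : Set X) :
    IsScaledPacking Δ δ (↑(∅ : Finset (X × ℝ)) : Set (X × ℝ)) S := by
  refine ⟨⟨⟨fun p hp => ?_, fun p hp => ?_⟩, fun p hp => ?_⟩, fun p hp => ?_⟩ <;> simp at hp

lemma wpre_union_le (W : X → ℝ≥0∞) (h : ℝ → ℝ) (Δ : Set ℝ) (δ : ℝ) (S T : Set X) :
    wpre W h Δ δ (S ∪ T) ≤ wpre W h Δ δ S + wpre W h Δ δ T := by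
  classical
  refine iSup₂_le fun π hπ => ?_
  rw [← Finset.sum_filter_add_sum_filter_not π (fun p => p.1 ∈ S)]
  have hsub1 : (↑(π.filter (fun p => p.1 ∈ S)) : Set (X × ℝ)) ⊆ ↑π := by
    intro p hp; simp only [Finset.coe_filter, Set.mem_setOf_eq] at hp
    exact Finset.mem_coe.2 hp.1
  have hsub2 : (↑(π.filter (fun p => ¬ p.1 ∈ S)) : Set (X × ℝ)) ⊆ ↑π := by
    intro p hp; simp only [Finset.coe_filter, Set.mem_setOf_eq] at hp
    exact Finset.mem_coe.2 hp.1
  have hS : IsScaledPacking Δ δ (↑(π.filter (fun p => p.1 ∈ S)) : Set (X × ℝ)) S := by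
    have hsub := isScaledPacking_subset hπ hsub1
    exact ⟨⟨hsub.1.1, fun p hp => by
      simp only [Finset.coe_filter, Set.mem_setOf_eq] at hp; exact hp.2⟩, hsub.2⟩
  have hT : IsScaledPacking Δ δ (↑(π.filter (fun p => ¬ p.1 ∈ S)) : Set (X × ℝ)) T := by
    have hsub := isScaledPacking_subset hπ hsub2
    refine ⟨⟨hsub.1.1, fun p hp => ?_⟩, hsub.2⟩
    have hp' := hp
    simp only [Finset.coe_filter, Set.mem_setOf_eq] at hp'
    rcases hsub.1.2 p hp with h1 | h1
    · exact absurd h1 hp'.2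
    · exact h1
  exact add_le_add (le_iSup₂_of_le _ hS le_rfl) (le_iSup₂_of_le _ hT le_rfl)

lemma wpre0_union_le (W : X → ℝ≥0∞) (h : ℝ → ℝ) (Δ : Set ℝ) (S T : Set X) :
    wpre0 W h Δ (S ∪ T) ≤ wpre0 W h Δ S + wpre0 W h Δ T := by
  rw [wpre0, wpre0, wpre0]
  rw [iInf_subtype', iInf_subtype', iInf_subtype']
  rw [ENNReal.iInf_add_iInf]
  · exact iInf_mono fun δ => (wpre_union_le W h Δ δ.1 S T)
  · intro i j
    refine ⟨⟨min i.1 j.1, lt_min i.2 j.2⟩, ?_⟩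
    exact add_le_add (wpre_mono_delta W h Δ (min_le_left _ _) S)
      (wpre_mono_delta W h Δ (min_le_right _ _) T)

lemma wpre_add_le_of_separated (W : X → ℝ≥0∞) (h : ℝ → ℝ) (Δ : Set ℝ) {S T : Set X}
    {ρ δ : ℝ} (hρ : 0 < ρ) (hsep : ∀ x ∈ S, ∀ y ∈ T, ρ ≤ dist x y) (hδ : δ < ρ) :
    wpre W h Δ δ S + wpre W h Δ δ T ≤ wpre W h Δ δ (S ∪ T) := by
  classical
  refine ENNReal.biSup_add_biSup_le' (p := fun π : Finset (X × ℝ) =>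
      IsScaledPacking Δ δ (↑π : Set (X × ℝ)) S) (q := fun π : Finset (X × ℝ) =>
      IsScaledPacking Δ δ (↑π : Set (X × ℝ)) T)
    ⟨∅, isScaledPacking_empty Δ δ S⟩ ⟨∅, isScaledPacking_empty Δ δ T⟩ ?_
  intro π1 h1 π2 h2
  have hdisj : Disjoint π1 π2 := by
    rw [Finset.disjoint_left]
    intro p hp1 hp2
    have hx1 : p.1 ∈ S := h1.1.2 p (by exact_mod_cast hp1)
    have hx2 : p.1 ∈ T := h2.1.2 p (by exact_mod_cast hp2)
    have := hsep p.1 hx1 p.1 hx2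
    simp at this; linarith
  have hpack : IsScaledPacking Δ δ (↑(π1 ∪ π2) : Set (X × ℝ)) (S ∪ T) := by
    refine ⟨⟨⟨fun p hp => ?_, fun p hp q hq hpq => ?_⟩, fun p hp => ?_⟩, fun p hp => ?_⟩
    · rcases Finset.mem_union.1 (by exact_mod_cast hp) with hp' | hp'
      · exact h1.1.1.1 p (by exact_mod_cast hp')
      · exact h2.1.1.1 p (by exact_mod_cast hp')
    · have hrp : p.2 ≤ δ := by
        rcases Finset.mem_union.1 (by exact_mod_cast hp) with hp' | hp'
        · exact (h1.2 p (by exact_mod_cast hp')).2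
        · exact (h2.2 p (by exact_mod_cast hp')).2
      rcases Finset.mem_union.1 (by exact_mod_cast hp) with hp' | hp' <;>
        rcases Finset.mem_union.1 (by exact_mod_cast hq) with hq' | hq'
      · exact h1.1.1.2 p (by exact_mod_cast hp') q (by exact_mod_cast hq') hpq
      · have := hsep p.1 (h1.1.2 p (by exact_mod_cast hp')) q.1 (h2.1.2 q (by exact_mod_cast hq'))
        linarith
      · have := hsep q.1 (h1.1.2 q (by exact_mod_cast hq')) p.1 (h2.1.2 p (by exact_mod_cast hp'))
        rw [dist_comm] at this
        linarith
      · exact h2.1.1.2 p (by exact_mod_cast hp') q (by exact_mod_cast hq') hpq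
    · rcases Finset.mem_union.1 (by exact_mod_cast hp) with hp' | hp'
      · exact Or.inl (h1.1.2 p (by exact_mod_cast hp'))
      · exact Or.inr (h2.1.2 p (by exact_mod_cast hp'))
    · rcases Finset.mem_union.1 (by exact_mod_cast hp) with hp' | hp'
      · exact h1.2 p (by exact_mod_cast hp')
      · exact h2.2 p (by exact_mod_cast hp')
  rw [← Finset.sum_union hdisj]
  exact le_iSup₂_of_le (π1 ∪ π2) hpack le_rfl

lemma wpre0_add_le_of_separated (W : X → ℝ≥0∞) (h : ℝ → ℝ) (Δ : Set ℝ) {S T : Set X}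
    (hsep : Metric.AreSeparated S T) :
    wpre0 W h Δ S + wpre0 W h Δ T ≤ wpre0 W h Δ (S ∪ T) := by
  obtain ⟨r, hr0, hr⟩ := hsep
  set ρ : ℝ := (min r 1).toReal with hρdef
  have hρpos : 0 < ρ := by
    apply ENNReal.toReal_pos
    · exact (lt_min (pos_iff_ne_zero.mpr hr0) zero_lt_one).ne'
    · exact ne_top_of_le_ne_top ENNReal.one_ne_top (min_le_right _ _)
  have hsep' : ∀ x ∈ S, ∀ y ∈ T, ρ ≤ dist x y := by
    intro x hx y hy
    have h1 : ENNReal.ofReal ρ ≤ edist x y := by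
      rw [hρdef, ENNReal.ofReal_toReal (ne_top_of_le_ne_top ENNReal.one_ne_top (min_le_right _ _))]
      exact le_trans (min_le_left _ _) (hr x hx y hy)
    rw [edist_dist] at h1
    have := (ENNReal.ofReal_le_ofReal_iff dist_nonneg).1 h1
    linarith [this]
  refine le_iInf₂ fun δ hδ => ?_
  have hδ' : 0 < min δ (ρ / 2) := lt_min hδ (by linarith)
  calc wpre0 W h Δ S + wpre0 W h Δ T
      ≤ wpre W h Δ (min δ (ρ/2)) S + wpre W h Δ (min δ (ρ/2)) T :=
        add_le_add (wpre0_le W h Δ hδ' S) (wpre0_le W h Δ hδ' T)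
    _ ≤ wpre W h Δ (min δ (ρ/2)) (S ∪ T) :=
        wpre_add_le_of_separated W h Δ hρpos hsep'
          (lt_of_le_of_lt (min_le_right _ _) (by linarith))
    _ ≤ wpre W h Δ δ (S ∪ T) := wpre_mono_delta W h Δ (min_le_left _ _) _

/-- The weighted outer measure. -/
noncomputable def wom (W : X → ℝ≥0∞) (h : ℝ → ℝ) (Δ : Set ℝ) : OuterMeasure X :=
  OuterMeasure.ofFunction (wpre0 W h Δ) (wpre0_empty W h Δ)

lemma wom_isMetric (W : X → ℝ≥0∞) (h : ℝ → ℝ) (Δ : Set ℝ) :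
    OuterMeasure.IsMetric (wom W h Δ) := by
  intro S T hsep
  refine le_antisymm (measure_union_le (μ := wom W h Δ) S T) ?_
  rw [wom, OuterMeasure.ofFunction_apply]
  refine le_iInf₂ fun C hC => ?_
  have hS : (wom W h Δ) S ≤ ∑' n, wpre0 W h Δ (C n ∩ S) := by
    rw [wom, OuterMeasure.ofFunction_apply]
    refine iInf₂_le (fun n => C n ∩ S) ?_
    intro x hx
    obtain ⟨n, hn⟩ := Set.mem_iUnion.1 (hC (Set.mem_union_left T hx))
    exact Set.mem_iUnion.2 ⟨n, hn, hx⟩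
  have hT : (wom W h Δ) T ≤ ∑' n, wpre0 W h Δ (C n ∩ T) := by
    rw [wom, OuterMeasure.ofFunction_apply]
    refine iInf₂_le (fun n => C n ∩ T) ?_
    intro x hx
    obtain ⟨n, hn⟩ := Set.mem_iUnion.1 (hC (Set.mem_union_right S hx))
    exact Set.mem_iUnion.2 ⟨n, hn, hx⟩
  calc (wom W h Δ) S + (wom W h Δ) T
      ≤ ∑' n, wpre0 W h Δ (C n ∩ S) + ∑' n, wpre0 W h Δ (C n ∩ T) := add_le_add hS hT
    _ = ∑' n, (wpre0 W h Δ (C n ∩ S) + wpre0 W h Δ (C n ∩ T)) := (ENNReal.tsum_add).symm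
    _ ≤ ∑' n, wpre0 W h Δ (C n) := by
        refine ENNReal.tsum_le_tsum fun n => ?_
        refine le_trans (wpre0_add_le_of_separated W h Δ
          (Metric.AreSeparated.mono Set.inter_subset_right Set.inter_subset_right hsep)) ?_
        exact wpre0_mono_set W h Δ
          (Set.union_subset Set.inter_subset_left Set.inter_subset_left)

lemma methodI_eq_wom (h : ℝ → ℝ) (Δ : Set ℝ) (S : Set X) :
    methodI (packPre0 h Δ) S = wom (fun _ => (1:ℝ≥0∞)) h Δ S := by
  rw [wom, OuterMeasure.ofFunction_apply, methodI]
  simp only [packPre0_eq_wpre0]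

end ZProof

namespace ZProof
open ZPaper

variable {X : Type*} [MetricSpace X] {Y : Type*} [MetricSpace Y]

/-- The set of points whose section has capacity × g at least `c` at all scales `≤ 1/(n+1)`. -/
def Acap (g : ℝ → ℝ) (E : Set (X × Y)) (c : ℝ≥0∞) (n : ℕ) : Set X :=
  {x | ∀ ρ : ℝ, 0 < ρ → ρ ≤ 1 / (n + 1) → c ≤ capacity ρ (sect E x) * ENNReal.ofReal (g ρ)}

lemma exists_finset_of_lt_capacity_mul {S : Set Y} {ρ : ℝ} {a b' : ℝ≥0∞}
    (hlt : b' < capacity ρ S * a) :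
    ∃ F : Finset Y, ↑F ⊆ S ∧ (∀ x ∈ F, ∀ y ∈ F, x ≠ y → ρ < dist x y) ∧
      b' < (F.card : ℝ≥0∞) * a := by
  rw [capacity, ENNReal.iSup_mul] at hlt
  obtain ⟨F, hF⟩ := lt_iSup_iff.1 hlt
  rw [ENNReal.iSup_mul] at hF
  obtain ⟨hcond, hlt'⟩ := lt_iSup_iff.1 hF
  exact ⟨F, hcond.1, hcond.2, hlt'⟩

lemma key_packing (g h : ℝ → ℝ) (hg : IsHausdorffFunction g)
    (Δ : Set ℝ) (E : Set (X × Y)) (W : X → ℝ≥0∞) {δ : ℝ}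
    (π : Finset (X × ℝ)) (hπ : IsScaledPacking Δ δ (↑π : Set (X × ℝ)) (Set.univ : Set X))
    (hdata : ∀ p ∈ π, ∃ (b : ℝ≥0∞) (n : ℕ), W p.1 < b ∧ p.2 ≤ 1 / (n + 1) ∧
      p.1 ∈ closure (Acap g E b n)) :
    ∑ p ∈ π, W p.1 * ENNReal.ofReal (h p.2) ≤ packPre (fun r => g r * h r) Δ δ E := by
  classical
  choose b n hWb hrn hcl using hdata
  have hpos : ∀ p ∈ π, (0:ℝ) < p.2 := fun p hp => hπ.1.1.1 p (Finset.mem_coe.2 hp)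
  have hmax : ∀ p ∈ π, ∀ q ∈ π, p ≠ q → max p.2 q.2 < dist p.1 q.1 := by
    intro p hp q hq hpq
    have h1 := hπ.1.1.2 p (Finset.mem_coe.2 hp) q (Finset.mem_coe.2 hq) hpq
    have h2 := hπ.1.1.2 q (Finset.mem_coe.2 hq) p (Finset.mem_coe.2 hp) (Ne.symm hpq)
    rw [dist_comm] at h2
    exact max_lt h1 h2
  -- perturbation radii
  set Sp : X × ℝ → Finset ℝ :=
    fun p => ((π.erase p).image (fun q => dist p.1 q.1 - max p.2 q.2)) with hSp
  set εp : X × ℝ → ℝ :=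
    fun p => if hS : (Sp p).Nonempty then min 1 ((Sp p).min' hS / 3) else 1 with hεp
  have hεpos : ∀ p ∈ π, 0 < εp p := by
    intro p hp
    by_cases hS : (Sp p).Nonempty
    · have helem : ∀ r ∈ Sp p, 0 < r := by
        intro r hr
        simp only [hSp, Finset.mem_image] at hr
        obtain ⟨q, hq, hval⟩ := hr
        have hq1 := Finset.mem_of_mem_erase hq
        have hqne : p ≠ q := fun he => (Finset.ne_of_mem_erase hq) he.symm
        have := hmax p hp q hq1 hqne
        rw [← hval]; linarith
      simp only [hεp]
      rw [dif_pos hS]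
      exact lt_min one_pos (div_pos (helem _ ((Sp p).min'_mem hS)) (by norm_num))
    · simp only [hεp]
      rw [dif_neg hS]
      exact one_pos
  have hεle : ∀ p ∈ π, ∀ q ∈ π, p ≠ q → εp p ≤ (dist p.1 q.1 - max p.2 q.2) / 3 := by
    intro p hp q hq hpq
    have hqe : q ∈ π.erase p := Finset.mem_erase.2 ⟨Ne.symm hpq, hq⟩
    have hS : (Sp p).Nonempty :=
      ⟨_, by simp only [hSp]; exact Finset.mem_image_of_mem _ hqe⟩
    simp only [hεp]
    rw [dif_pos hS]
    refine le_trans (min_le_right _ _) ?_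
    have := (Sp p).min'_le _ (by simp only [hSp]; exact Finset.mem_image_of_mem _ hqe)
    linarith
  -- perturbed centers
  have hx : ∀ p, ∀ hp : p ∈ π, ∃ x'', x'' ∈ Acap g E (b p hp) (n p hp) ∧ dist p.1 x'' < εp p :=
    fun p hp => by
      obtain ⟨y, hy1, hy2⟩ := Metric.mem_closure_iff.1 (hcl p hp) (εp p) (hεpos p hp)
      exact ⟨y, hy1, hy2⟩
  choose x' hx'A hx'd using hx
  have hsep' : ∀ p, ∀ hp : p ∈ π, ∀ q, ∀ hq : q ∈ π, p ≠ q →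
      max p.2 q.2 < dist (x' p hp) (x' q hq) := by
    intro p hp q hq hpq
    have h4 := dist_triangle4 p.1 (x' p hp) (x' q hq) q.1
    have hεq := hεle q hq p hp (Ne.symm hpq)
    rw [dist_comm q.1 p.1, max_comm q.2 p.2] at hεq
    have hεp' := hεle p hp q hq hpq
    have hd1 := hx'd p hp
    have hd2 := hx'd q hq
    rw [dist_comm] at hd2
    have hm := hmax p hp q hq hpq
    linarith
  have hx'inj : ∀ p, ∀ hp : p ∈ π, ∀ q, ∀ hq : q ∈ π, p ≠ q → x' p hp ≠ x' q hq := by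
    intro p hp q hq hpq heq
    have h0 := hsep' p hp q hq hpq
    rw [heq, dist_self] at h0
    have h1 := hpos p hp
    have h2 := le_max_left p.2 q.2
    linarith
  -- capacity extraction
  have hcap : ∀ p, ∀ hp : p ∈ π, ∃ F : Finset Y, ↑F ⊆ sect E (x' p hp) ∧
      (∀ y ∈ F, ∀ z ∈ F, y ≠ z → p.2 < dist y z) ∧
      W p.1 < (F.card : ℝ≥0∞) * ENNReal.ofReal (g p.2) := by
    intro p hp
    refine exists_finset_of_lt_capacity_mul (lt_of_lt_of_le (hWb p hp) ?_)
    exact hx'A p hp p.2 (hpos p hp) (hrn p hp)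
  choose F hFsub hFsep hFcard using hcap
  -- the product packing
  set PP : Finset ((X × Y) × ℝ) := π.attach.biUnion
    (fun t => (F t.1 t.2).image (fun y => ((x' t.1 t.2, y), t.1.2))) with hPP
  have hmemPP : ∀ z, z ∈ PP ↔ ∃ t : {p // p ∈ π}, t ∈ π.attach ∧
      ∃ y ∈ F t.1 t.2, ((x' t.1 t.2, y), t.1.2) = z := by
    intro z
    rw [hPP, Finset.mem_biUnion]
    constructor
    · rintro ⟨t, ht, hz⟩
      rw [Finset.mem_image] at hz
      obtain ⟨y, hy, hz⟩ := hz
      exact ⟨t, ht, y, hy, hz⟩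
    · rintro ⟨t, ht, y, hy, hz⟩
      exact ⟨t, ht, Finset.mem_image.2 ⟨y, hy, hz⟩⟩
  have hpackPP : IsScaledPacking Δ δ (↑PP : Set ((X × Y) × ℝ)) E := by
    refine ⟨⟨⟨fun z hz => ?_, fun z hz w hw hzw => ?_⟩, fun z hz => ?_⟩, fun z hz => ?_⟩
    · obtain ⟨t, _, y, hy, rfl⟩ := (hmemPP z).1 (Finset.mem_coe.1 hz)
      exact hpos t.1 t.2
    · obtain ⟨t, _, y, hy, rfl⟩ := (hmemPP z).1 (Finset.mem_coe.1 hz)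
      obtain ⟨s, _, y', hy', rfl⟩ := (hmemPP w).1 (Finset.mem_coe.1 hw)
      rw [Prod.dist_eq]
      by_cases hts : t = s
      · subst hts
        have hyy : y ≠ y' := by
          intro he; exact hzw (by rw [he])
        exact lt_max_of_lt_right (hFsep t.1 t.2 y hy y' hy' hyy)
      · have hts' : t.1 ≠ s.1 := fun he => hts (Subtype.ext he)
        refine lt_max_of_lt_left ?_
        dsimp only
        exact lt_of_le_of_lt (le_max_left _ _) (hsep' t.1 t.2 s.1 s.2 hts')
    · obtain ⟨t, _, y, hy, rfl⟩ := (hmemPP z).1 (Finset.mem_coe.1 hz)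
      exact hFsub t.1 t.2 hy
    · obtain ⟨t, _, y, hy, rfl⟩ := (hmemPP z).1 (Finset.mem_coe.1 hz)
      exact hπ.2 t.1 (Finset.mem_coe.2 t.2)
  -- the value of the product packing
  have hval : ∑ p ∈ π, W p.1 * ENNReal.ofReal (h p.2) ≤
      ∑ z ∈ PP, ENNReal.ofReal (g z.2 * h z.2) := by
    have hdisj : (↑(π.attach) : Set {p // p ∈ π}).PairwiseDisjoint
        (fun t => (F t.1 t.2).image (fun y => ((x' t.1 t.2, y), t.1.2))) := by
      intro t _ s _ hts
      refine Finset.disjoint_left.2 fun z hz1 hz2 => ?_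
      rw [Finset.mem_image] at hz1 hz2
      obtain ⟨y, hy, rfl⟩ := hz1
      obtain ⟨y', hy', he⟩ := hz2
      have : x' s.1 s.2 = x' t.1 t.2 := congrArg (fun w => w.1.1) he
      exact hx'inj s.1 s.2 t.1 t.2 (fun hst => hts (Subtype.ext hst).symm) this
    rw [hPP, Finset.sum_biUnion hdisj]
    rw [← Finset.sum_attach π (fun p => W p.1 * ENNReal.ofReal (h p.2))]
    refine Finset.sum_le_sum fun t _ => ?_
    rw [Finset.sum_image (fun a _ c _ hac => by
      have : a = c := congrArg (fun w => w.1.2) hac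
      exact this)]
    dsimp only
    rw [Finset.sum_const, nsmul_eq_mul]
    have hgpos : 0 < g t.1.2 := hg.2 t.1.2 (hpos t.1 t.2)
    rw [ENNReal.ofReal_mul hgpos.le]
    rw [← mul_assoc]
    refine mul_le_mul' ?_ le_rfl
    exact (hFcard t.1 t.2).le
  refine le_trans hval ?_
  exact sum_le_packPre PP hpackPP

end ZProof

namespace ZProof
open ZPaper

variable {X : Type*} [MetricSpace X] {Y : Type*} [MetricSpace Y]

lemma packPre_mono_delta (g : ℝ → ℝ) (Δ : Set ℝ) {δ δ' : ℝ} (hd : δ ≤ δ') (S : Set X) :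
    packPre g Δ δ S ≤ packPre g Δ δ' S := by
  rw [packPre_eq_wpre, packPre_eq_wpre]
  exact wpre_mono_delta _ g Δ hd S

section Meas

variable [MeasurableSpace X] [BorelSpace X]

noncomputable def womM (W : X → ℝ≥0∞) (h : ℝ → ℝ) (Δ : Set ℝ) : Measure X :=
  (wom W h Δ).toMeasure
    ((BorelSpace.measurable_eq (α := X)).trans_le (wom_isMetric W h Δ).borel_le_caratheodory)

lemma womM_apply (W : X → ℝ≥0∞) (h : ℝ → ℝ) (Δ : Set ℝ) {s : Set X} (hs : MeasurableSet s) :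
    womM W h Δ s = wom W h Δ s :=
  MeasureTheory.toMeasure_apply _ _ hs

lemma weighted_sum (g h : ℝ → ℝ) (hg : IsHausdorffFunction g) (Δ : Set ℝ) (E : Set (X × Y))
    {ι : Type*} (K : Finset ι) (T : ι → Set X) (b b' : ι → ℝ≥0∞) (n : ι → ℕ)
    (hTm : ∀ k ∈ K, MeasurableSet (T k))
    (hTd : ∀ k ∈ K, ∀ l ∈ K, k ≠ l → Disjoint (T k) (T l))
    (hb' : ∀ k ∈ K, b' k < b k)
    (hTA : ∀ k ∈ K, T k ⊆ closure (Acap g E (b k) (n k))) :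
    ∑ k ∈ K, b' k * methodI (packPre0 h Δ) (T k) ≤ packPre0 (fun r => g r * h r) Δ E := by
  classical
  rcases K.eq_empty_or_nonempty with rfl | hK
  · simp
  set W : X → ℝ≥0∞ := fun x => ∑ k ∈ K, if x ∈ T k then b' k else 0 with hW
  have w_eq : ∀ k ∈ K, ∀ x ∈ T k, W x = b' k := by
    intro k hk x hx
    simp only [hW]
    rw [Finset.sum_eq_single_of_mem k hk]
    · rw [if_pos hx]
    · intro l hl hlk
      rw [if_neg]
      intro hxl
      exact Set.disjoint_left.1 (hTd l hl k hk hlk) hxl hx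
  -- Step 1: b' k · μ(T k) ≤ wom W (T k)
  have step1 : ∀ k ∈ K, b' k * methodI (packPre0 h Δ) (T k) ≤ wom W h Δ (T k) := by
    intro k hk
    have claim : ∀ S : Set X, S ⊆ T k →
        b' k * wpre0 (fun _ => (1:ℝ≥0∞)) h Δ S ≤ wpre0 W h Δ S := by
      intro S hS
      refine le_iInf₂ fun δ hδ => ?_
      refine le_trans (mul_le_mul' le_rfl (wpre0_le _ h Δ hδ S)) ?_
      rw [wpre, wpre, ENNReal.mul_iSup]
      refine iSup_le fun π => ?_
      rw [ENNReal.mul_iSup]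
      refine iSup_le fun hπ => ?_
      rw [Finset.mul_sum]
      refine le_trans (le_of_eq (Finset.sum_congr rfl fun p hp => ?_))
        (le_iSup₂_of_le π hπ le_rfl)
      rw [one_mul, w_eq k hk p.1 (hS (hπ.1.2 p (Finset.mem_coe.2 hp)))]
    rw [wom, OuterMeasure.ofFunction_apply]
    refine le_iInf₂ fun C hC => ?_
    have h1 : methodI (packPre0 h Δ) (T k) ≤ ∑' m, packPre0 h Δ (C m ∩ T k) := by
      rw [methodI]
      refine iInf₂_le (fun m => C m ∩ T k) ?_
      intro x hx
      obtain ⟨m, hm⟩ := Set.mem_iUnion.1 (hC hx)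
      exact Set.mem_iUnion.2 ⟨m, hm, hx⟩
    calc b' k * methodI (packPre0 h Δ) (T k)
        ≤ b' k * ∑' m, packPre0 h Δ (C m ∩ T k) := mul_le_mul' le_rfl h1
      _ = ∑' m, b' k * packPre0 h Δ (C m ∩ T k) := ENNReal.tsum_mul_left.symm
      _ ≤ ∑' m, wpre0 W h Δ (C m ∩ T k) := by
          refine ENNReal.tsum_le_tsum fun m => ?_
          rw [packPre0_eq_wpre0]
          exact claim _ Set.inter_subset_right
      _ ≤ ∑' m, wpre0 W h Δ (C m) :=
          ENNReal.tsum_le_tsum fun m => wpre0_mono_set W h Δ Set.inter_subset_left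
  -- Step 2: additivity
  have step2 : ∑ k ∈ K, wom W h Δ (T k) = wom W h Δ (⋃ k ∈ K, T k) := by
    have := measure_biUnion_finset (μ := womM W h Δ) (s := K) (f := T)
      (fun k hk l hl hkl => hTd k hk l hl hkl) hTm
    rw [womM_apply W h Δ (K.measurableSet_biUnion hTm)] at this
    rw [this]
    exact Finset.sum_congr rfl fun k hk => (womM_apply W h Δ (hTm k hk)).symm
  -- Step 3
  have step3 : wom W h Δ (⋃ k ∈ K, T k) ≤ packPre0 (fun r => g r * h r) Δ E := by
    refine le_trans (OuterMeasure.ofFunction_le _) ?_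
    rw [packPre0]
    refine le_iInf₂ fun δ hδ => ?_
    set δ₀ : ℝ := K.inf' hK (fun k => 1 / (n k + 1)) with hδ₀
    have hδ₀pos : 0 < δ₀ := by
      rw [hδ₀, Finset.lt_inf'_iff]
      intro k _
      positivity
    have hδ' : 0 < min δ δ₀ := lt_min hδ hδ₀pos
    refine le_trans (wpre0_le W h Δ hδ' _) ?_
    refine le_trans ?_ (packPre_mono_delta _ Δ (min_le_left δ δ₀) E)
    refine iSup₂_le fun π hπ => ?_
    refine key_packing g h hg Δ E W π (isScaledPacking_mono_set hπ (Set.subset_univ _)) ?_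
    intro p hp
    have hcen := hπ.1.2 p (Finset.mem_coe.2 hp)
    obtain ⟨k, hk, hpk⟩ := by
      simpa only [Set.mem_iUnion, exists_prop] using hcen
    refine ⟨b k, n k, ?_, ?_, ?_⟩
    · rw [w_eq k hk p.1 hpk]; exact hb' k hk
    · refine le_trans (hπ.2 p (Finset.mem_coe.2 hp)).2 ?_
      exact le_trans (min_le_right δ δ₀) (Finset.inf'_le _ hk)
    · exact hTA k hk hpk
  calc ∑ k ∈ K, b' k * methodI (packPre0 h Δ) (T k)
      ≤ ∑ k ∈ K, wom W h Δ (T k) := Finset.sum_le_sum step1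
    _ = wom W h Δ (⋃ k ∈ K, T k) := step2
    _ ≤ packPre0 (fun r => g r * h r) Δ E := step3

end Meas
end ZProof

namespace ZProof
open ZPaper

variable {X : Type*} [MetricSpace X] {Y : Type*} [MetricSpace Y]

lemma Acap_anti (g : ℝ → ℝ) (E : Set (X × Y)) {c c' : ℝ≥0∞} (hcc : c' ≤ c) (n : ℕ) :
    Acap g E c n ⊆ Acap g E c' n := fun x hx ρ hρ hρn => le_trans hcc (hx ρ hρ hρn)

lemma Acap_mono_n (g : ℝ → ℝ) (E : Set (X × Y)) (c : ℝ≥0∞) {n n' : ℕ} (hnn : n ≤ n') :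
    Acap g E c n ⊆ Acap g E c n' := by
  intro x hx ρ hρ hρn
  refine hx ρ hρ (le_trans hρn ?_)
  have h1 : (0:ℝ) < n + 1 := by positivity
  have h2 : (n:ℝ) + 1 ≤ (n':ℝ) + 1 := by exact_mod_cast by omega
  exact one_div_le_one_div_of_le h1 h2

lemma subset_iUnion_Acap (g : ℝ → ℝ) (E : Set (X × Y)) (c : ℝ≥0∞) :
    {x : X | c < lboxPre0 g (sect E x)} ⊆ ⋃ n : ℕ, Acap g E c n := by
  intro x hx
  have hev : ∀ᶠ ρ in 𝓝[>] (0:ℝ), c < capacity ρ (sect E x) * ENNReal.ofReal (g ρ) :=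
    Filter.eventually_lt_of_lt_liminf hx
  rw [eventually_nhdsWithin_iff] at hev
  rw [Metric.eventually_nhds_iff] at hev
  obtain ⟨ε, hε, hball⟩ := hev
  obtain ⟨n, hn⟩ := exists_nat_one_div_lt hε
  refine Set.mem_iUnion.2 ⟨n, fun ρ hρ hρn => ?_⟩
  have hd : dist ρ 0 < ε := by
    rw [Real.dist_eq, sub_zero, abs_of_pos hρ]
    exact lt_of_le_of_lt hρn hn
  exact (hball hd hρ).le

lemma ladder {t : ℝ≥0} (ht : 1 < t) {w : ℝ≥0} (hw : 0 < w) :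
    ∃ j : ℤ, t ^ (j + 1) < w ∧ w ≤ t ^ (j + 2) := by
  have ht0 : (0:ℝ) < (t:ℝ) := lt_trans one_pos (by exact_mod_cast ht)
  have ht1 : (t:ℝ) ≠ 1 := by exact_mod_cast ht.ne'
  have ht1' : (1:ℝ) < (t:ℝ) := by exact_mod_cast ht
  have hw0 : (0:ℝ) < (w:ℝ) := by exact_mod_cast hw
  set z := Real.logb t w with hz
  have hwz : (t:ℝ) ^ (z:ℝ) = w := Real.rpow_logb ht0 ht1 hw0
  refine ⟨⌈z⌉ - 2, ?_, ?_⟩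
  · rw [← NNReal.coe_lt_coe, NNReal.coe_zpow]
    have : ((⌈z⌉ - 2 + 1 : ℤ) : ℝ) < z := by
      push_cast
      have := Int.ceil_lt_add_one z
      linarith
    calc (t:ℝ) ^ (⌈z⌉ - 2 + 1 : ℤ) = (t:ℝ) ^ ((⌈z⌉ - 2 + 1 : ℤ) : ℝ) :=
          (Real.rpow_intCast _ _).symm
      _ < (t:ℝ) ^ (z:ℝ) := by
          exact Real.rpow_lt_rpow_of_exponent_lt ht1' this
      _ = w := hwz
  · rw [← NNReal.coe_le_coe, NNReal.coe_zpow]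
    have : z ≤ ((⌈z⌉ - 2 + 2 : ℤ) : ℝ) := by
      push_cast
      have := Int.le_ceil z
      linarith
    calc (w:ℝ) = (t:ℝ) ^ (z:ℝ) := hwz.symm
      _ ≤ (t:ℝ) ^ (((⌈z⌉ - 2 + 2 : ℤ)) : ℝ) := Real.rpow_le_rpow_of_exponent_le ht1'.le this
      _ = (t:ℝ) ^ (⌈z⌉ - 2 + 2 : ℤ) := Real.rpow_intCast _ _

lemma czpow_strictMono {t : ℝ≥0} (ht : 1 < t) :
    StrictMono fun j : ℤ => ((t ^ j : ℝ≥0) : ℝ≥0∞) := by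
  intro j k hjk
  rw [ENNReal.coe_lt_coe]
  exact zpow_lt_zpow_right₀ ht hjk

lemma czpow_top {t : ℝ≥0} (ht : 1 < t) : ⨆ m : ℕ, ((t ^ (m:ℤ) : ℝ≥0) : ℝ≥0∞) = ⊤ := by
  rw [iSup_eq_top]
  intro b hb
  lift b to ℝ≥0 using hb.ne
  obtain ⟨m, hm⟩ := pow_unbounded_of_one_lt b ht
  refine ⟨m, ?_⟩
  rw [ENNReal.coe_lt_coe, zpow_natCast]
  exact hm

end ZProof

/-- Lemma `lem:delta0`. For metric spaces `X`, `Y`, Hausdorff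
functions `g`, `h`, a scale `Δ` and any `E ⊆ X × Y`,
`pack^{gh}_{Δ,0}(E) ≥ ∫* lboxm^g_0(E_x) d pack^h_Δ(x)`. -/
theorem stmt6 {X Y : Type*} [MetricSpace X] [MetricSpace Y] (g h : ℝ → ℝ)
    (hg : IsHausdorffFunction g) (hh : IsHausdorffFunction h)
    (Δ : Set ℝ) (hΔ : IsScale Δ) (E : Set (X × Y)) :
    packPre0 (fun r => g r * h r) Δ E ≥
      upperIntegral (packMeasure h Δ) (fun x => lboxPre0 g (sect E x)) := by
  classical
  letI : MeasurableSpace X := borel X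
  haveI : BorelSpace X := ⟨rfl⟩
  rw [ge_iff_le]
  set P := packPre0 (fun r => g r * h r) Δ E with hP
  have main : ∀ t : ℝ≥0, 1 < t →
      upperIntegral (packMeasure h Δ) (fun x => lboxPre0 g (sect E x))
        ≤ ((t : ℝ≥0∞)) ^ (3:ℕ) * P := by
    intro t ht
    have ht0 : (0:ℝ≥0) < t := lt_trans one_pos ht
    have htne : (t:ℝ≥0∞) ≠ 0 := by exact_mod_cast ht0.ne'
    set c : ℤ → ℝ≥0∞ := fun j => ((t ^ j : ℝ≥0) : ℝ≥0∞) with hc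
    have hcpos : ∀ j, 0 < c j := fun j => by
      simp only [hc]; exact_mod_cast zpow_pos ht0 j
    have hcne : ∀ j, c j ≠ ⊤ := fun j => ENNReal.coe_ne_top
    have hcmono : StrictMono c := ZProof.czpow_strictMono ht
    have hctop : ⨆ m : ℕ, c (m:ℤ) = ⊤ := ZProof.czpow_top ht
    have hcsplit : ∀ j : ℤ, c j = (t:ℝ≥0∞) * c (j - 1) := by
      intro j
      simp only [hc, ← ENNReal.coe_mul]
      congr 1
      have h2 : t ^ (1:ℤ) * t ^ (j - 1) = t ^ j := by
        rw [← zpow_add₀ (ne_of_gt ht0)]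
        congr 1
        ring
      rw [← h2, zpow_one]
    have hcsq : ∀ j : ℤ, (t:ℝ≥0∞) ^ (2:ℕ) * c j = c (j + 2) := by
      intro j
      simp only [hc, ← ENNReal.coe_pow, ← ENNReal.coe_mul]
      congr 1
      rw [← zpow_natCast t 2, ← zpow_add₀ (ne_of_gt ht0)]
      congr 1
      ring
    set Wset : ℤ → Set X := fun j => ⋃ n : ℕ, closure (ZProof.Acap g E (c j) n) with hWset
    have hWmeas : ∀ j, MeasurableSet (Wset j) := fun j =>
      MeasurableSet.iUnion fun n => isClosed_closure.measurableSet
    have hWanti : ∀ {j j' : ℤ}, j ≤ j' → Wset j' ⊆ Wset j := by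
      intro j j' hjj
      exact Set.iUnion_mono fun n => closure_mono (ZProof.Acap_anti g E (hcmono.monotone hjj) n)
    have hfW : ∀ (j : ℤ) (x : X), c j < lboxPre0 g (sect E x) → x ∈ Wset j := by
      intro j x hx
      obtain ⟨n, hn⟩ := Set.mem_iUnion.1 (ZProof.subset_iUnion_Acap g E (c j) hx)
      exact Set.mem_iUnion.2 ⟨n, subset_closure hn⟩
    set φ : X → ℝ≥0∞ := fun x => ⨆ j : ℤ, (Wset j).indicator (fun _ => c (j+1)) x with hφ
    have hφm : Measurable φ :=
      Measurable.iSup fun j => Measurable.indicator measurable_const (hWmeas j)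
    have hφf : ∀ x, lboxPre0 g (sect E x) ≤ φ x := by
      intro x
      by_cases hv0 : lboxPre0 g (sect E x) = 0
      · rw [hv0]; exact zero_le
      by_cases hvt : lboxPre0 g (sect E x) = ⊤
      · have hmem : ∀ j : ℤ, x ∈ Wset j := fun j =>
          hfW j x (by rw [hvt]; exact (hcne j).lt_top)
        have hb : ∀ m : ℕ, c (m:ℤ) ≤ φ x := by
          intro m
          refine le_trans ?_ (le_iSup _ ((m:ℤ) - 1))
          rw [Set.indicator_of_mem (hmem ((m:ℤ) - 1))]
          rw [sub_add_cancel]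
        rw [hvt]
        calc (⊤:ℝ≥0∞) = ⨆ m : ℕ, c (m:ℤ) := hctop.symm
          _ ≤ φ x := iSup_le hb
      · have hvpos : 0 < (lboxPre0 g (sect E x)).toNNReal :=
          ENNReal.toNNReal_pos hv0 hvt
        obtain ⟨j, hj1, hj2⟩ := ZProof.ladder ht hvpos
        have hj1' : c (j + 1) < lboxPre0 g (sect E x) := by
          rw [← ENNReal.coe_toNNReal hvt]
          simp only [hc]
          exact ENNReal.coe_lt_coe.2 hj1
        have hj2' : lboxPre0 g (sect E x) ≤ c (j + 2) := by
          rw [← ENNReal.coe_toNNReal hvt]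
          simp only [hc]
          exact ENNReal.coe_le_coe.2 hj2
        have hxW : x ∈ Wset (j + 1) := hfW (j + 1) x hj1'
        refine le_trans hj2' ?_
        refine le_trans ?_ (le_iSup _ (j + 1))
        rw [Set.indicator_of_mem hxW]
        have : j + 1 + 1 = j + 2 := by ring
        rw [this]
    -- reduce to a bound on the s-integral of φ
    unfold upperIntegral
    refine le_trans (iInf_le _ φ) ?_
    refine le_trans (iInf_le _ hφf) ?_
    refine le_trans (iInf_le _ hφm) ?_
    unfold sLintegral
    refine iSup₂_le fun s hs => ?_
    -- notation
    have hμν : ∀ {A : Set X}, MeasurableSet A →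
        ZProof.womM (fun _ => (1:ℝ≥0∞)) h Δ A = packMeasure h Δ A := by
      intro A hA
      rw [ZProof.womM_apply _ _ _ hA, ← ZProof.methodI_eq_wom]
      rfl
    have hDmeas : ∀ y : ℝ≥0∞, MeasurableSet (⇑s ⁻¹' {y}) := fun y => s.measurableSet_fiber y
    -- ladder choice
    have hlad : ∀ (y : ℝ≥0∞) (m : ℕ), ∃ j : ℤ, y ≠ 0 →
        c (j + 1) < min y (c (m:ℤ)) ∧ min y (c (m:ℤ)) ≤ (t:ℝ≥0∞) ^ (2:ℕ) * c j := by
      intro y m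
      by_cases hy : y = 0
      · exact ⟨0, fun hy' => absurd hy hy'⟩
      have hvpos : 0 < min y (c (m:ℤ)) := lt_min (pos_iff_ne_zero.2 hy) (hcpos _)
      have hvne : min y (c (m:ℤ)) ≠ ⊤ :=
        ne_top_of_le_ne_top (hcne _) (min_le_right _ _)
      have hvpos' : 0 < (min y (c (m:ℤ))).toNNReal := ENNReal.toNNReal_pos hvpos.ne' hvne
      obtain ⟨j, hj1, hj2⟩ := ZProof.ladder ht hvpos'
      refine ⟨j, fun _ => ⟨?_, ?_⟩⟩
      · rw [← ENNReal.coe_toNNReal hvne]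
        simp only [hc]
        exact ENNReal.coe_lt_coe.2 hj1
      · rw [hcsq j, ← ENNReal.coe_toNNReal hvne]
        simp only [hc]
        exact ENNReal.coe_le_coe.2 hj2
    choose jf hjf using hlad
    -- the bound for each cutoff m
    have keym : ∀ m : ℕ,
        ∑ y ∈ s.range, min y (c (m:ℤ)) * packMeasure h Δ ((⇑s ⁻¹' {y})) ≤ (t:ℝ≥0∞) ^ (3:ℕ) * P := by
      intro m
      rw [← Finset.sum_filter_add_sum_filter_not s.range (fun y => y ≠ 0)]
      have hzero : ∑ y ∈ s.range.filter (fun y => ¬ y ≠ 0),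
          min y (c (m:ℤ)) * packMeasure h Δ ((⇑s ⁻¹' {y})) = 0 := by
        refine Finset.sum_eq_zero fun y hy => ?_
        rw [Finset.mem_filter] at hy
        rw [not_not.1 hy.2]
        simp
      rw [hzero, add_zero]
      set K := s.range.filter (fun y => y ≠ 0) with hK
      have hKne : ∀ y ∈ K, y ≠ 0 := fun y hy => (Finset.mem_filter.1 hy).2
      -- fibers lie in the W-sets
      have hDW : ∀ y ∈ K, (⇑s ⁻¹' {y}) ⊆ Wset (jf y m) := by
        intro y hy x hx
        have hsx : s x = y := hx
        have hyφ : min y (c (m:ℤ)) ≤ φ x := by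
          refine le_trans (min_le_left _ _) ?_
          rw [← hsx]
          exact hs x
        have hlt : c (jf y m + 1) < φ x :=
          lt_of_lt_of_le (hjf y m (hKne y hy)).1 hyφ
        rw [hφ] at hlt
        obtain ⟨i, hi⟩ := lt_iSup_iff.1 hlt
        by_cases hxi : x ∈ Wset i
        · rw [Set.indicator_of_mem hxi] at hi
          have : jf y m + 1 < i + 1 := hcmono.lt_iff_lt.1 hi
          exact hWanti (by omega) hxi
        · rw [Set.indicator_of_notMem hxi] at hi
          exact absurd hi (not_lt_zero'.elim ∘ id)
      -- continuity from below along the closures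
      have hDrep : ∀ y ∈ K, packMeasure h Δ ((⇑s ⁻¹' {y})) =
          ⨆ N : ℕ, ZProof.womM (fun _ => (1:ℝ≥0∞)) h Δ
            ((⇑s ⁻¹' {y}) ∩ closure (ZProof.Acap g E (c (jf y m)) N)) := by
        intro y hy
        rw [← hμν (hDmeas y)]
        have hUeq : (⋃ N : ℕ, (⇑s ⁻¹' {y}) ∩ closure (ZProof.Acap g E (c (jf y m)) N))
            = (⇑s ⁻¹' {y}) := by
          rw [← Set.inter_iUnion]
          refine Set.inter_eq_left.2 ?_
          intro x hx
          obtain ⟨n, hn⟩ := Set.mem_iUnion.1 (hDW y hy hx)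
          exact Set.mem_iUnion.2 ⟨n, hn⟩
        have hdir : Directed (· ⊆ ·)
            (fun N : ℕ => (⇑s ⁻¹' {y}) ∩ closure (ZProof.Acap g E (c (jf y m)) N)) := by
          refine Monotone.directed_le fun N N' hNN => ?_
          exact Set.inter_subset_inter le_rfl
            (closure_mono (ZProof.Acap_mono_n g E _ hNN))
        have heq := Directed.measure_iUnion (μ := ZProof.womM (fun _ => (1:ℝ≥0∞)) h Δ)
          (s := fun N : ℕ => (⇑s ⁻¹' {y}) ∩ closure (ZProof.Acap g E (c (jf y m)) N)) hdir
        rw [hUeq] at heq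
        exact heq
      -- the per-N weighted bound
      have hsumN : ∀ N : ℕ, ∑ y ∈ K, c (jf y m) *
          ZProof.womM (fun _ => (1:ℝ≥0∞)) h Δ
            ((⇑s ⁻¹' {y}) ∩ closure (ZProof.Acap g E (c (jf y m)) N)) ≤ (t:ℝ≥0∞) * P := by
        intro N
        have hTm : ∀ y ∈ K, MeasurableSet
            ((⇑s ⁻¹' {y}) ∩ closure (ZProof.Acap g E (c (jf y m)) N)) := fun y _ =>
          (hDmeas y).inter isClosed_closure.measurableSet
        have hcalc : ∑ y ∈ K, c (jf y m) * ZProof.womM (fun _ => (1:ℝ≥0∞)) h Δ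
              ((⇑s ⁻¹' {y}) ∩ closure (ZProof.Acap g E (c (jf y m)) N))
            = (t:ℝ≥0∞) * ∑ y ∈ K, c (jf y m - 1) * methodI (packPre0 h Δ)
              ((⇑s ⁻¹' {y}) ∩ closure (ZProof.Acap g E (c (jf y m)) N)) := by
          rw [Finset.mul_sum]
          refine Finset.sum_congr rfl fun y hy => ?_
          rw [hμν (hTm y hy), ← mul_assoc, ← hcsplit (jf y m)]
          rfl
        rw [hcalc]
        refine mul_le_mul' le_rfl ?_
        refine ZProof.weighted_sum g h hg Δ E K
          (fun y => (⇑s ⁻¹' {y}) ∩ closure (ZProof.Acap g E (c (jf y m)) N))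
          (fun y => c (jf y m)) (fun y => c (jf y m - 1)) (fun _ => N) hTm ?_ ?_ ?_
        · intro y hy y' hy' hyy
          refine Disjoint.mono Set.inter_subset_left Set.inter_subset_left ?_
          rw [Set.disjoint_left]
          intro x hx hx'
          have h1 : s x = y := hx
          have h2 : s x = y' := hx'
          exact hyy (by rw [← h1, ← h2])
        · intro y _
          exact hcmono (by omega)
        · intro y _
          exact Set.inter_subset_right
      -- assemble for this m
      calc ∑ y ∈ K, min y (c (m:ℤ)) * packMeasure h Δ ((⇑s ⁻¹' {y}))
          ≤ ∑ y ∈ K, (t:ℝ≥0∞) ^ (2:ℕ) * (c (jf y m) * packMeasure h Δ ((⇑s ⁻¹' {y}))) := by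
            refine Finset.sum_le_sum fun y hy => ?_
            rw [← mul_assoc]
            exact mul_le_mul' (hjf y m (hKne y hy)).2 le_rfl
        _ = (t:ℝ≥0∞) ^ (2:ℕ) * ∑ y ∈ K, c (jf y m) * packMeasure h Δ ((⇑s ⁻¹' {y})) :=
            (Finset.mul_sum _ _ _).symm
        _ ≤ (t:ℝ≥0∞) ^ (2:ℕ) * ((t:ℝ≥0∞) * P) := by
            refine mul_le_mul' le_rfl ?_
            have : ∑ y ∈ K, c (jf y m) * packMeasure h Δ ((⇑s ⁻¹' {y}))
                = ⨆ N : ℕ, ∑ y ∈ K, c (jf y m) * ZProof.womM (fun _ => (1:ℝ≥0∞)) h Δ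
                    ((⇑s ⁻¹' {y}) ∩ closure (ZProof.Acap g E (c (jf y m)) N)) := by
              rw [← ENNReal.finsetSum_iSup_of_monotone]
              · refine Finset.sum_congr rfl fun y hy => ?_
                rw [hDrep y hy, ENNReal.mul_iSup]
              · intro y N N' hNN
                refine mul_le_mul' le_rfl ?_
                refine measure_mono ?_
                exact Set.inter_subset_inter le_rfl
                  (closure_mono (ZProof.Acap_mono_n g E _ hNN))
            rw [this]
            exact iSup_le hsumN
        _ = (t:ℝ≥0∞) ^ (3:ℕ) * P := by ring
    -- take the supremum over cutoffs
    have hfin : ∑ y ∈ s.range, y * packMeasure h Δ (⇑s ⁻¹' {y})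
        = ⨆ m : ℕ, ∑ y ∈ s.range, min y (c (m:ℤ)) * packMeasure h Δ ((⇑s ⁻¹' {y})) := by
      rw [← ENNReal.finsetSum_iSup_of_monotone]
      · refine Finset.sum_congr rfl fun y _ => ?_
        have hy : ⨆ m : ℕ, min y (c (m:ℤ)) = y := by
          have hmc : ∀ m : ℕ, min y (c (m:ℤ)) = c (m:ℤ) ⊓ y := fun m => min_comm _ _
          simp only [hmc]
          rw [← iSup_inf_eq, hctop, top_inf_eq]
        calc y * packMeasure h Δ (⇑s ⁻¹' {y})
            = (⨆ m : ℕ, min y (c (m:ℤ))) * packMeasure h Δ (⇑s ⁻¹' {y}) := by rw [hy]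
          _ = ⨆ m : ℕ, min y (c (m:ℤ)) * packMeasure h Δ (⇑s ⁻¹' {y}) := by
              rw [ENNReal.iSup_mul]
      · intro y m m' hmm
        exact mul_le_mul' (min_le_min le_rfl (hcmono.monotone (by exact_mod_cast hmm))) le_rfl
    rw [hfin]
    exact iSup_le keym
  -- conclude by letting t → 1
  by_cases hPtop : P = ⊤
  · rw [hPtop]; exact le_top
  have hseq : ∀ k : ℕ, upperIntegral (packMeasure h Δ) (fun x => lboxPre0 g (sect E x))
      ≤ ((1 + ((k:ℝ≥0) + 1)⁻¹ : ℝ≥0) : ℝ≥0∞) ^ (3:ℕ) * P := by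
    intro k
    refine main _ ?_
    have : (0:ℝ≥0) < ((k:ℝ≥0) + 1)⁻¹ := by positivity
    exact lt_add_of_pos_right 1 this
  have h0 : Filter.Tendsto (fun k : ℕ => (((k:ℝ≥0) + 1)⁻¹ : ℝ≥0)) Filter.atTop (nhds 0) := by
    rw [← NNReal.tendsto_coe]
    simpa [one_div] using tendsto_one_div_add_atTop_nhds_zero_nat (𝕜 := ℝ)
  have h1 : Filter.Tendsto (fun k : ℕ => (1 + ((k:ℝ≥0) + 1)⁻¹ : ℝ≥0)) Filter.atTop (nhds 1) := by
    have := Filter.Tendsto.const_add (1:ℝ≥0) h0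
    simpa using this
  have h2 : Filter.Tendsto (fun k : ℕ => ((1 + ((k:ℝ≥0) + 1)⁻¹ : ℝ≥0) : ℝ≥0∞))
      Filter.atTop (nhds 1) := by
    rw [← ENNReal.coe_one]
    exact ENNReal.tendsto_coe.2 h1
  have h3 : Filter.Tendsto (fun k : ℕ => ((1 + ((k:ℝ≥0) + 1)⁻¹ : ℝ≥0) : ℝ≥0∞) ^ (3:ℕ) * P)
      Filter.atTop (nhds P) := by
    have hpow := ((ENNReal.continuous_pow 3).tendsto 1).comp h2
    rw [one_pow] at hpow
    have hpow : Filter.Tendsto (fun k : ℕ =>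
        ((1 + ((k:ℝ≥0) + 1)⁻¹ : ℝ≥0) : ℝ≥0∞) ^ (3:ℕ)) Filter.atTop (nhds 1) := hpow
    have := ENNReal.Tendsto.mul_const (b := P) hpow (Or.inl one_ne_zero)
    rwa [one_mul] at this
  exact ge_of_tendsto h3 (Filter.Eventually.of_forall hseq)
end
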